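/- arXiv:1202.5721 — 7 statements merged into one kernel-verified Lean document; each statement's English description precedes it below -/
import Mathlib

section
/- For any finite simple graph G, the minimum number of dependent arcs over all acyclic orientations of G is at least the minimum number of edges whose deletion from G leaves a triangle-free graph. -/
open SimpleGraph

variable {V : Type*}

/-- An orientation of a simple graph: each edge gets exactly one direction. -/
structure GraphOrientation {V : Type*} (G : SimpleGraph V) where
  rel : V → V → Prop
  sub : ∀ ⦃u v⦄, rel u v → G.Adj u v
  cover : ∀ ⦃u v⦄, G.Adj u v → rel u v ∨ rel v u
  asymm : ∀ ⦃u v⦄, rel u v → ¬ rel v u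

/-- An orientation is acyclic if it has no directed cycle. -/
def GraphOrientation.Acyclic {G : SimpleGraph V} (D : GraphOrientation G) : Prop :=
  ∀ v, ¬ Relation.TransGen D.rel v v

/-- An arc `u → v` of an acyclic orientation is dependent iff its reversal creates a
directed cycle, equivalently there is another directed path from `u` to `v`. -/
def GraphOrientation.Dep {G : SimpleGraph V} (D : GraphOrientation G) (u v : V) : Prop :=
  D.rel u v ∧ Relation.TransGen (fun a b => D.rel a b ∧ ¬(a = u ∧ b = v)) u v

/-- The set of dependent arcs of an orientation. -/
def GraphOrientation.depArcs {G : SimpleGraph V} (D : GraphOrientation G) : Set (V × V) :=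
  {p | D.Dep p.1 p.2}

/-- The number of dependent arcs. -/
noncomputable def depCount {G : SimpleGraph V} (D : GraphOrientation G) : ℕ :=
  D.depArcs.ncard

/-- Minimum number of dependent arcs over all acyclic orientations. -/
noncomputable def dmin (G : SimpleGraph V) : ℕ :=
  sInf {k | ∃ D : GraphOrientation G, D.Acyclic ∧ depCount D = k}

/-- Maximum number of dependent arcs over all acyclic orientations. -/
noncomputable def dmax (G : SimpleGraph V) : ℕ :=
  sSup {k | ∃ D : GraphOrientation G, D.Acyclic ∧ depCount D = k}

/-- Minimum number of edges whose deletion makes `G` triangle-free. -/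
noncomputable def piT (G : SimpleGraph V) : ℕ :=
  sInf {k | ∃ S : Set (Sym2 V), S ⊆ G.edgeSet ∧ S.ncard = k ∧ (G.deleteEdges S).CliqueFree 3}

/-- The square of the cycle `C_n` on vertices `ZMod n`. -/
def cycleSq (n : ℕ) : SimpleGraph (ZMod n) where
  Adj u v := u ≠ v ∧ (u - v = 1 ∨ v - u = 1 ∨ u - v = 2 ∨ v - u = 2)
  symm := ⟨fun u v h => ⟨h.1.symm, by tauto⟩⟩
  loopless := ⟨fun u h => h.1 rfl⟩

lemma dep_of_trans {V : Type*} {G : SimpleGraph V} (D : GraphOrientation G) {x y z : V}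
    (hxy : D.rel x y) (hyz : D.rel y z) (hxz : D.rel x z) : D.Dep x z := by
  have h1 : x ≠ y := (D.sub hxy).ne
  have h2 : y ≠ z := (D.sub hyz).ne
  refine ⟨hxz, Relation.TransGen.head ⟨hxy, ?_⟩ (Relation.TransGen.single ⟨hyz, ?_⟩)⟩
  · rintro ⟨-, rfl⟩; exact h2 rfl
  · rintro ⟨rfl, -⟩; exact h1 rfl

/-- In any acyclic orientation, every triangle contains a dependent arc. -/
lemma tri_dep {V : Type*} {G : SimpleGraph V} (D : GraphOrientation G) (hD : D.Acyclic)
    {a b c : V} (hab : G.Adj a b) (hbc : G.Adj b c) (hac : G.Adj a c) :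
    ∃ x y, D.Dep x y ∧ (s(x, y) = s(a, b) ∨ s(x, y) = s(b, c) ∨ s(x, y) = s(a, c)) := by
  rcases D.cover hab with r1 | r1 <;> rcases D.cover hbc with r2 | r2 <;>
    rcases D.cover hac with r3 | r3
  · exact ⟨a, c, dep_of_trans D r1 r2 r3, by simp⟩
  · exact absurd (Relation.TransGen.head r1 (Relation.TransGen.head r2
      (Relation.TransGen.single r3))) (hD a)
  · exact ⟨a, b, dep_of_trans D r3 r2 r1, by simp⟩
  · exact ⟨c, b, dep_of_trans D r3 r1 r2, by simp [Sym2.eq_swap]⟩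
  · exact ⟨b, c, dep_of_trans D r1 r3 r2, by simp⟩
  · exact ⟨b, a, dep_of_trans D r2 r3 r1, by simp [Sym2.eq_swap]⟩
  · exact absurd (Relation.TransGen.head r3 (Relation.TransGen.head r2
      (Relation.TransGen.single r1))) (hD a)
  · exact ⟨c, a, dep_of_trans D r2 r1 r3, by simp [Sym2.eq_swap]⟩

/-- `d_min(G) ≥ π_T(G)` for any finite graph `G`. -/
theorem stmt1 {V : Type*} [Fintype V] (G : SimpleGraph V) :
    piT G ≤ dmin G := by
  classical
  have hne : {k | ∃ D : GraphOrientation G, D.Acyclic ∧ depCount D = k}.Nonempty := by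
    let e := Fintype.equivFin V
    refine ⟨_, ⟨⟨fun u v => G.Adj u v ∧ e u < e v, fun u v h => h.1,
      fun u v h => ?_, fun u v h h' => ?_⟩, ?_, rfl⟩⟩
    · rcases lt_or_gt_of_ne (fun heq => h.ne (e.injective heq)) with h' | h'
      · exact Or.inl ⟨h, h'⟩
      · exact Or.inr ⟨h.symm, h'⟩
    · exact absurd h'.2 (not_lt.2 h.2.le)
    · intro v hv
      have h2 : Relation.TransGen (fun a b : V => e a < e b) v v :=
        Relation.TransGen.mono (p := fun a b : V => e a < e b)
          (fun a b (hab : G.Adj a b ∧ e a < e b) => hab.2) v v hv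
      rw [show (Relation.TransGen fun a b : V => e a < e b) = fun a b => e a < e b from
        @Relation.transGen_eq_self _ _ ⟨fun a b c hab hbc => lt_trans hab hbc⟩] at h2
      exact lt_irrefl _ h2
  obtain ⟨D, hD, hcount⟩ : ∃ D : GraphOrientation G, D.Acyclic ∧ depCount D = dmin G :=
    Nat.sInf_mem hne
  set S : Set (Sym2 V) := (fun p : V × V => s(p.1, p.2)) '' D.depArcs with hS
  have hsub : S ⊆ G.edgeSet := by
    rintro _ ⟨⟨x, y⟩, hp, rfl⟩
    exact (SimpleGraph.mem_edgeSet G).2 (D.sub hp.1)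
  have hfree : (G.deleteEdges S).CliqueFree 3 := by
    intro t ht
    obtain ⟨a, b, c, hab', hac', hbc', rfl⟩ := Finset.card_eq_three.1 ht.2
    have hab : (G.deleteEdges S).Adj a b := ht.1 (by simp) (by simp) hab'
    have hbc : (G.deleteEdges S).Adj b c := ht.1 (by simp) (by simp) hbc'
    have hac : (G.deleteEdges S).Adj a c := ht.1 (by simp) (by simp) hac'
    rw [SimpleGraph.deleteEdges_adj] at hab hbc hac
    obtain ⟨x, y, hdep, hxy⟩ := tri_dep D hD hab.1 hbc.1 hac.1
    have hmem : s(x, y) ∈ S := ⟨(x, y), hdep, rfl⟩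
    rcases hxy with h | h | h
    · exact hab.2 (h ▸ hmem)
    · exact hbc.2 (h ▸ hmem)
    · exact hac.2 (h ▸ hmem)
  have h1 : piT G ≤ S.ncard := Nat.sInf_le ⟨S, hsub, rfl, hfree⟩
  have h2 : S.ncard ≤ depCount D := Set.ncard_image_le (Set.toFinite _)
  exact h1.trans (h2.trans hcount.le)
end

section
/- For n ≥ 7, the minimum number of edges whose deletion makes the square of the cycle C_n triangle-free equals ⌈n/2⌉. -/
open SimpleGraph

variable {V : Type*}

/-! ### Auxiliary lemmas -/

lemma zmod_nat_ne_zero {n : ℕ} (hn : 7 ≤ n) {k : ℕ} (h1 : 0 < k) (h2 : k < 7) :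
    (k : ZMod n) ≠ 0 := by
  haveI : NeZero n := ⟨by omega⟩
  intro h
  rw [ZMod.natCast_eq_zero_iff] at h
  have := Nat.le_of_dvd h1 h
  omega

lemma one_ne {n : ℕ} (hn : 7 ≤ n) : (1 : ZMod n) ≠ 0 := by
  have := zmod_nat_ne_zero hn (k := 1) one_pos (by norm_num); simpa using this
lemma two_ne {n : ℕ} (hn : 7 ≤ n) : (2 : ZMod n) ≠ 0 := by
  have := zmod_nat_ne_zero hn (k := 2) (by norm_num) (by norm_num); simpa using this
lemma three_ne {n : ℕ} (hn : 7 ≤ n) : (3 : ZMod n) ≠ 0 := by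
  have := zmod_nat_ne_zero hn (k := 3) (by norm_num) (by norm_num); simpa using this
lemma four_ne {n : ℕ} (hn : 7 ≤ n) : (4 : ZMod n) ≠ 0 := by
  have := zmod_nat_ne_zero hn (k := 4) (by norm_num) (by norm_num); simpa using this

lemma diff_int {n : ℕ} {a b : ZMod n} (h : (cycleSq n).Adj a b) :
    ∃ d : ℤ, b - a = (d : ZMod n) ∧ (d = 1 ∨ d = -1 ∨ d = 2 ∨ d = -2) := by
  rcases h.2 with h1|h1|h1|h1
  · exact ⟨-1, by push_cast; linear_combination -h1, by tauto⟩
  · exact ⟨1, by push_cast; linear_combination h1, by tauto⟩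
  · exact ⟨-2, by push_cast; linear_combination -h1, by tauto⟩
  · exact ⟨2, by push_cast; linear_combination h1, by tauto⟩

/-- Any triangle of `C_n^2` (n ≥ 7) consists of three consecutive vertices. -/
lemma tri_class {n : ℕ} (hn : 7 ≤ n) {a b c : ZMod n}
    (hab : (cycleSq n).Adj a b) (hac : (cycleSq n).Adj a c) (hbc : (cycleSq n).Adj b c) :
    ∃ i : ZMod n,
      (a = i ∧ b = i+1 ∧ c = i+2) ∨ (a = i ∧ c = i+1 ∧ b = i+2) ∨
      (b = i ∧ a = i+1 ∧ c = i+2) ∨ (b = i ∧ c = i+1 ∧ a = i+2) ∨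
      (c = i ∧ a = i+1 ∧ b = i+2) ∨ (c = i ∧ b = i+1 ∧ a = i+2) := by
  obtain ⟨d, hd1, hd2⟩ := diff_int hab
  obtain ⟨e, he1, he2⟩ := diff_int hac
  obtain ⟨f, hf1, hf2⟩ := diff_int hbc
  have h0 : ((e - d - f : ℤ) : ZMod n) = 0 := by
    push_cast
    linear_combination hd1 + hf1 - he1
  have hdvd : (n : ℤ) ∣ (e - d - f) := (ZMod.intCast_zmod_eq_zero_iff_dvd _ n).mp h0
  have hm : e - d - f = 0 := Int.eq_zero_of_dvd_of_natAbs_lt_natAbs hdvd (by omega)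
  rcases hd2 with rfl|rfl|rfl|rfl <;> rcases he2 with rfl|rfl|rfl|rfl <;>
    first
      | (exfalso; omega)
      | (push_cast at hd1 he1
         first
         | exact ⟨a, Or.inl ⟨rfl, by linear_combination hd1, by linear_combination he1⟩⟩
         | exact ⟨a, Or.inr (Or.inl ⟨rfl, by linear_combination he1, by linear_combination hd1⟩)⟩
         | exact ⟨b, Or.inr (Or.inr (Or.inl ⟨rfl, by linear_combination -hd1,
             by linear_combination he1 - hd1⟩))⟩
         | exact ⟨b, Or.inr (Or.inr (Or.inr (Or.inl ⟨rfl, by linear_combination he1 - hd1,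
             by linear_combination -hd1⟩)))⟩
         | exact ⟨c, Or.inr (Or.inr (Or.inr (Or.inr (Or.inl ⟨rfl, by linear_combination -he1,
             by linear_combination hd1 - he1⟩))))⟩
         | exact ⟨c, Or.inr (Or.inr (Or.inr (Or.inr (Or.inr ⟨rfl, by linear_combination hd1 - he1,
             by linear_combination -he1⟩))))⟩)

/-- The edges to delete. -/
noncomputable def delEdge (n : ℕ) (k : ℕ) : Sym2 (ZMod n) :=
  s(((2*k : ℕ) : ZMod n), ((2*k+1 : ℕ) : ZMod n))

noncomputable def S0 (n : ℕ) : Set (Sym2 (ZMod n)) := delEdge n '' {k | k < (n+1)/2}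

lemma S0_sub {n : ℕ} (hn : 7 ≤ n) : S0 n ⊆ (cycleSq n).edgeSet := by
  rintro e ⟨k, _, rfl⟩
  rw [delEdge, SimpleGraph.mem_edgeSet]
  constructor
  · intro h
    apply one_ne hn
    have h2 : ((2*k+1 : ℕ) : ZMod n) - ((2*k : ℕ) : ZMod n) = 1 := by push_cast; ring
    rw [← h] at h2
    simpa using h2.symm
  · right; left; push_cast; ring

lemma S0_card {n : ℕ} (hn : 7 ≤ n) : (S0 n).ncard = (n+1)/2 := by
  haveI : NeZero n := ⟨by omega⟩
  have hset : {k | k < (n+1)/2} = ↑(Finset.Iio ((n+1)/2)) := by ext; simp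
  rw [S0, Set.ncard_image_of_injOn, hset, Set.ncard_coe_finset, Nat.card_Iio]
  intro k hk j hj h
  simp only [Set.mem_setOf_eq] at hk hj
  rw [delEdge, delEdge, Sym2.eq_iff] at h
  rcases h with ⟨h1, _⟩ | ⟨h1, h2⟩
  · have e1 : (2*k) = 2*j := by
      have := congrArg ZMod.val h1
      rwa [ZMod.val_cast_of_lt (by omega), ZMod.val_cast_of_lt (by omega)] at this
    omega
  · exfalso
    apply two_ne hn
    push_cast at h1 h2
    linear_combination h2 - h1

lemma S0_cover {n : ℕ} (hn : 7 ≤ n) (i : ZMod n) :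
    ∃ e ∈ S0 n, e = s(i, i+1) ∨ e = s(i+1, i+2) := by
  haveI : NeZero n := ⟨by omega⟩
  obtain ⟨m, hmn, rfl⟩ : ∃ m : ℕ, m < n ∧ (m : ZMod n) = i :=
    ⟨i.val, ZMod.val_lt i, by simp [ZMod.natCast_val, ZMod.cast_id]⟩
  rcases Nat.even_or_odd m with ⟨t, rfl⟩ | ⟨t, rfl⟩
  · refine ⟨delEdge n t, ⟨t, by simp only [Set.mem_setOf_eq]; omega, rfl⟩, Or.inl ?_⟩
    rw [delEdge, Sym2.eq_iff]
    left
    constructor <;> (push_cast; ring)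
  · rcases Nat.lt_or_ge (2*t+2) n with hlt | hge
    · refine ⟨delEdge n (t+1), ⟨t+1, by simp only [Set.mem_setOf_eq]; omega, rfl⟩, Or.inr ?_⟩
      rw [delEdge, Sym2.eq_iff]
      left
      constructor <;> (push_cast; ring)
    · have hn2 : 2*t + 2 = n := by omega
      refine ⟨delEdge n 0, ⟨0, by simp only [Set.mem_setOf_eq]; omega, rfl⟩, Or.inr ?_⟩
      have hz : ((2*t+1 : ℕ) : ZMod n) + 1 = 0 := by
        have h : ((2*t+2 : ℕ) : ZMod n) = 0 := by rw [hn2]; exact ZMod.natCast_self n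
        push_cast at h ⊢
        linear_combination h
      push_cast at hz
      rw [delEdge, Sym2.eq_iff]
      left
      constructor <;> (push_cast; linear_combination -hz)

lemma S0_cliqueFree {n : ℕ} (hn : 7 ≤ n) :
    ((cycleSq n).deleteEdges (S0 n)).CliqueFree 3 := by
  classical
  intro t ht
  rw [SimpleGraph.is3Clique_iff] at ht
  obtain ⟨a, b, c, hab, hac, hbc, -⟩ := ht
  rw [SimpleGraph.deleteEdges_adj] at hab hac hbc
  obtain ⟨i, hperm⟩ := tri_class hn hab.1 hac.1 hbc.1
  obtain ⟨e, heS, he⟩ := S0_cover hn i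
  rcases hperm with ⟨rfl, rfl, rfl⟩ | ⟨rfl, rfl, rfl⟩ | ⟨rfl, rfl, rfl⟩ |
    ⟨rfl, rfl, rfl⟩ | ⟨rfl, rfl, rfl⟩ | ⟨rfl, rfl, rfl⟩ <;>
    rcases he with rfl | rfl <;>
      first
        | exact hab.2 heS
        | exact hac.2 heS
        | exact hbc.2 heS
        | (rw [Sym2.eq_swap] at heS
           first
             | exact hab.2 heS
             | exact hac.2 heS
             | exact hbc.2 heS)

lemma lower_bound {n : ℕ} (hn : 7 ≤ n) {S : Set (Sym2 (ZMod n))}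
    (hcf : ((cycleSq n).deleteEdges S).CliqueFree 3) : (n+1)/2 ≤ S.ncard := by
  classical
  haveI : NeZero n := ⟨by omega⟩
  have hfin : S.Finite := Set.toFinite S
  have hex : ∀ i : ZMod n, ∃ e ∈ S, e = s(i, i+1) ∨ e = s(i+1, i+2) ∨ e = s(i, i+2) := by
    intro i
    by_contra hcon
    push_neg at hcon
    apply hcf {i, i+1, i+2}
    rw [SimpleGraph.is3Clique_triple_iff]
    have a1 : (cycleSq n).Adj i (i+1) :=
      ⟨fun h => one_ne hn (by linear_combination -h), Or.inr (Or.inl (by ring))⟩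
    have a2 : (cycleSq n).Adj i (i+2) :=
      ⟨fun h => two_ne hn (by linear_combination -h), Or.inr (Or.inr (Or.inr (by ring)))⟩
    have a3 : (cycleSq n).Adj (i+1) (i+2) :=
      ⟨fun h => one_ne hn (by linear_combination -h), Or.inr (Or.inl (by ring))⟩
    refine ⟨SimpleGraph.deleteEdges_adj.mpr ⟨a1, fun hm => ?_⟩,
            SimpleGraph.deleteEdges_adj.mpr ⟨a2, fun hm => ?_⟩,
            SimpleGraph.deleteEdges_adj.mpr ⟨a3, fun hm => ?_⟩⟩
    · exact (hcon _ hm).1 rfl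
    · exact (hcon _ hm).2.2 rfl
    · exact (hcon _ hm).2.1 rfl
  set f : ZMod n → Sym2 (ZMod n) := fun i => (hex i).choose with hfdef
  have hfS : ∀ i, f i ∈ S := fun i => (hex i).choose_spec.1
  have hfor : ∀ i, f i = s(i, i+1) ∨ f i = s(i+1, i+2) ∨ f i = s(i, i+2) :=
    fun i => (hex i).choose_spec.2
  set g : ZMod n → Sym2 (ZMod n) × Bool :=
    fun i => (f i, if f i = s(i, i+1) then true else false) with hgdef
  have hinj : Function.Injective g := by
    intro i j hg
    rw [hgdef] at hg
    simp only [Prod.mk.injEq] at hg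
    obtain ⟨hfe, htag⟩ := hg
    by_cases hpi : f i = s(i, i+1) <;> by_cases hpj : f j = s(j, j+1)
    · rw [hpi, hpj, Sym2.eq_iff] at hfe
      rcases hfe with ⟨h1, h2⟩ | ⟨h1, h2⟩
      · exact h1
      · exact absurd (show (2 : ZMod n) = 0 by linear_combination h2 - h1) (two_ne hn)
    · simp [hpi, hpj] at htag
    · simp [hpi, hpj] at htag
    · have hi2 := (hfor i).resolve_left hpi
      have hj2 := (hfor j).resolve_left hpj
      rcases hi2 with hi2 | hi2 <;> rcases hj2 with hj2 | hj2 <;>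
        rw [hi2, hj2, Sym2.eq_iff] at hfe <;>
          rcases hfe with ⟨h1, h2⟩ | ⟨h1, h2⟩ <;>
            first
            | linear_combination h1
            | exact absurd (show (1 : ZMod n) = 0 by
                first | linear_combination h1 - h2 | linear_combination h2 - h1) (one_ne hn)
            | exact absurd (show (2 : ZMod n) = 0 by
                first | linear_combination h1 - h2 | linear_combination h2 - h1) (two_ne hn)
            | exact absurd (show (3 : ZMod n) = 0 by
                first | linear_combination h1 - h2 | linear_combination h2 - h1) (three_ne hn)
            | exact absurd (show (4 : ZMod n) = 0 by
                first | linear_combination h1 - h2 | linear_combination h2 - h1) (four_ne hn)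
  have himg : (Finset.univ.image g).card = n := by
    rw [Finset.card_image_of_injective _ hinj, Finset.card_univ, ZMod.card]
  have hsub2 : Finset.univ.image g ⊆ hfin.toFinset ×ˢ (Finset.univ : Finset Bool) := by
    intro p hp
    simp only [Finset.mem_image] at hp
    obtain ⟨i, -, rfl⟩ := hp
    rw [Finset.mem_product]
    exact ⟨hfin.mem_toFinset.mpr (hfS i), Finset.mem_univ _⟩
  have hle := Finset.card_le_card hsub2
  rw [himg, Finset.card_product, Finset.card_univ, Fintype.card_bool] at hle
  rw [Set.ncard_eq_toFinset_card S hfin]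
  omega

/-- For `n ≥ 7`, `π_T(C_n^2) = ⌈n/2⌉`. -/
theorem stmt4 (n : ℕ) (hn : 7 ≤ n) :
    piT (cycleSq n) = (n + 1) / 2 := by
  have hmem : (n + 1) / 2 ∈ {k | ∃ S : Set (Sym2 (ZMod n)), S ⊆ (cycleSq n).edgeSet ∧
      S.ncard = k ∧ ((cycleSq n).deleteEdges S).CliqueFree 3} :=
    ⟨S0 n, S0_sub hn, S0_card hn, S0_cliqueFree hn⟩
  rw [piT]
  refine le_antisymm (Nat.sInf_le hmem) (le_csInf ⟨_, hmem⟩ ?_)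
  rintro k ⟨S, hsub, rfl, hcf⟩
  exact lower_bound hn hcf
end

section
/- For even n ≥ 7, the edge set S = {v_1v_2, v_3v_4, …, v_{n−1}v_0} of size n/2 has the property that C_n^2 − S is triangle-free. -/
open SimpleGraph

variable {V : Type*}

section Aux

lemma cast_val_self' (n : ℕ) [NeZero n] (x : ZMod n) : ((x.val : ℕ) : ZMod n) = x := by
  simp [ZMod.natCast_val, ZMod.cast_id]

lemma odd_val_cast' (n : ℕ) (he : Even n) (m : ℕ) :
    Odd ((m : ZMod n)).val ↔ Odd m := by
  rw [ZMod.val_natCast, Nat.odd_iff, Nat.odd_iff, Nat.mod_mod_of_dvd m he.two_dvd]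

lemma memS' (n : ℕ) (hn : 7 ≤ n) (he : Even n) (y : ZMod n) (hy : Odd y.val) :
    s(y, y+1) ∈ {e : Sym2 (ZMod n) | ∃ k : ℕ, k < n / 2 ∧
        e = s(((2 * k + 1 : ℕ) : ZMod n), ((2 * k + 2 : ℕ) : ZMod n))} := by
  have : NeZero n := ⟨by omega⟩
  obtain ⟨k, hk⟩ := hy
  have hlt : y.val < n := ZMod.val_lt y
  refine ⟨k, by omega, ?_⟩
  have h1 : ((2 * k + 1 : ℕ) : ZMod n) = y := by rw [← hk]; exact cast_val_self' n y
  have h2 : ((2 * k + 2 : ℕ) : ZMod n) = y + 1 := by push_cast [← h1]; push_cast; ring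
  rw [h1, h2]

lemma key2' (n : ℕ) (hn : 7 ≤ n) (he : Even n) (x : ZMod n) :
    ∃ y : ZMod n, Odd y.val ∧ (s(y, y+1) = s(x, x+1) ∨ s(y, y+1) = s(x+1, x+2)) := by
  have : NeZero n := ⟨by omega⟩
  rcases Nat.even_or_odd x.val with hx | hx
  · refine ⟨x + 1, ?_, Or.inr ?_⟩
    · have h : x + 1 = ((x.val + 1 : ℕ) : ZMod n) := by push_cast [cast_val_self']; ring
      rw [h, odd_val_cast' n he]
      exact Even.add_one hx
    · have : x + 1 + 1 = x + 2 := by ring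
      rw [this]
  · exact ⟨x, hx, Or.inl rfl⟩

lemma swap_mem' {α : Type*} {S : Set (Sym2 α)} {u v : α} (h : s(u, v) ∈ S) :
    s(v, u) ∈ S := by rwa [Sym2.eq_swap]

lemma diff_rep' (n : ℕ) (a b : ZMod n)
    (h : a - b = 1 ∨ b - a = 1 ∨ a - b = 2 ∨ b - a = 2) :
    ∃ d : ℤ, a - b = (d : ZMod n) ∧ (d = 1 ∨ d = -1 ∨ d = 2 ∨ d = -2) := by
  rcases h with h | h | h | h
  · exact ⟨1, by push_cast; linear_combination h, by tauto⟩
  · exact ⟨-1, by push_cast; linear_combination -h, by tauto⟩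
  · exact ⟨2, by push_cast; linear_combination h, by tauto⟩
  · exact ⟨-2, by push_cast; linear_combination -h, by tauto⟩

lemma tri' (n : ℕ) (hn : 7 ≤ n) (a b c : ZMod n)
    (h1 : (cycleSq n).Adj a b) (h2 : (cycleSq n).Adj a c) (h3 : (cycleSq n).Adj b c) :
    (∃ x : ZMod n, a = x + 2 ∧ b = x + 1 ∧ c = x) ∨
    (∃ x : ZMod n, a = x + 1 ∧ b = x ∧ c = x + 2) ∨
    (∃ x : ZMod n, a = x ∧ b = x + 1 ∧ c = x + 2) ∨
    (∃ x : ZMod n, a = x + 1 ∧ b = x + 2 ∧ c = x) ∨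
    (∃ x : ZMod n, a = x + 2 ∧ b = x ∧ c = x + 1) ∨
    (∃ x : ZMod n, a = x ∧ b = x + 2 ∧ c = x + 1) := by
  obtain ⟨d1, hd1, hd1v⟩ := diff_rep' n a b (And.right h1)
  obtain ⟨d3, hd3, hd3v⟩ := diff_rep' n a c (And.right h2)
  obtain ⟨d2, hd2, hd2v⟩ := diff_rep' n b c (And.right h3)
  have hz : ((d1 + d2 - d3 : ℤ) : ZMod n) = 0 := by
    push_cast
    rw [← hd1, ← hd2, ← hd3]; ring
  have hdvd : (n : ℤ) ∣ (d1 + d2 - d3) := (ZMod.intCast_zmod_eq_zero_iff_dvd _ n).mp hz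
  have hdvd' : n ∣ (d1 + d2 - d3).natAbs := by
    have := Int.natAbs_dvd_natAbs.mpr hdvd
    simpa using this
  have h0 : d1 + d2 - d3 = 0 := by
    rcases Nat.eq_zero_or_pos (d1 + d2 - d3).natAbs with h | h
    · omega
    · have := Nat.le_of_dvd h hdvd'
      omega
  have hcase : (d1 = 1 ∧ d2 = 1) ∨ (d1 = 1 ∧ d2 = -2) ∨ (d1 = -1 ∧ d2 = -1) ∨
      (d1 = -1 ∧ d2 = 2) ∨ (d1 = 2 ∧ d2 = -1) ∨ (d1 = -2 ∧ d2 = 1) := by omega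
  have e1 : a = b + (d1 : ZMod n) := by linear_combination hd1
  have e2 : b = c + (d2 : ZMod n) := by linear_combination hd2
  rcases hcase with ⟨u, v⟩ | ⟨u, v⟩ | ⟨u, v⟩ | ⟨u, v⟩ | ⟨u, v⟩ | ⟨u, v⟩ <;>
    subst u v <;> push_cast at e1 e2
  · exact Or.inl ⟨c, by linear_combination e1 + e2, e2, rfl⟩
  · exact Or.inr (Or.inl ⟨b, e1, rfl, by linear_combination -e2⟩)
  · exact Or.inr (Or.inr (Or.inl ⟨a, rfl, by linear_combination -e1,
      by linear_combination -e1 - e2⟩))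
  · exact Or.inr (Or.inr (Or.inr (Or.inl ⟨c, by linear_combination e1 + e2, e2, rfl⟩)))
  · exact Or.inr (Or.inr (Or.inr (Or.inr (Or.inl ⟨b, e1, rfl, by linear_combination -e2⟩))))
  · exact Or.inr (Or.inr (Or.inr (Or.inr (Or.inr ⟨a, rfl, by linear_combination -e1,
      by linear_combination -e1 - e2⟩))))

lemma card_part' (n : ℕ) (hn : 7 ≤ n) (he : Even n) :
    ({e : Sym2 (ZMod n) | ∃ k : ℕ, k < n / 2 ∧
        e = s(((2 * k + 1 : ℕ) : ZMod n), ((2 * k + 2 : ℕ) : ZMod n))}.ncard = n / 2) := by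
  have : NeZero n := ⟨by omega⟩
  have hset : {e : Sym2 (ZMod n) | ∃ k : ℕ, k < n / 2 ∧
      e = s(((2 * k + 1 : ℕ) : ZMod n), ((2 * k + 2 : ℕ) : ZMod n))} =
      ↑((Finset.range (n / 2)).image
        (fun k => s(((2 * k + 1 : ℕ) : ZMod n), ((2 * k + 2 : ℕ) : ZMod n)))) := by
    ext e
    simp only [Set.mem_setOf_eq, Finset.coe_image, Set.mem_image, Finset.mem_coe,
      Finset.mem_range]
    constructor
    · rintro ⟨k, hk, rfl⟩; exact ⟨k, hk, rfl⟩
    · rintro ⟨k, hk, rfl⟩; exact ⟨k, hk, rfl⟩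
  rw [hset, Set.ncard_coe_finset]
  rw [Finset.card_image_of_injOn, Finset.card_range]
  intro k hk k' hk' h
  simp only [Finset.mem_coe, Finset.mem_range] at hk hk'
  rw [Sym2.eq_iff] at h
  obtain ⟨hm, _⟩ | ⟨hm, _⟩ := h
  · have h1 : (2 * k + 1) < n := by omega
    have h2 : (2 * k' + 1) < n := by omega
    have := congrArg ZMod.val hm
    rw [ZMod.val_cast_of_lt h1, ZMod.val_cast_of_lt h2] at this
    omega
  · exfalso
    have ho : Odd (((2 * k + 1 : ℕ) : ZMod n)).val := (odd_val_cast' n he _).mpr ⟨k, by ring⟩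
    rw [hm, odd_val_cast' n he, Nat.odd_iff] at ho
    omega

end Aux

/-- For even `n ≥ 7`, deleting the `n/2` edges `v_1v_2, v_3v_4, …, v_{n-1}v_0`
from `C_n^2` leaves a triangle-free graph. -/
theorem stmt5 (n : ℕ) (hn : 7 ≤ n) (he : Even n) :
    ({e : Sym2 (ZMod n) | ∃ k : ℕ, k < n / 2 ∧
        e = s(((2 * k + 1 : ℕ) : ZMod n), ((2 * k + 2 : ℕ) : ZMod n))}.ncard = n / 2) ∧
    ((cycleSq n).deleteEdges
      {e : Sym2 (ZMod n) | ∃ k : ℕ, k < n / 2 ∧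
        e = s(((2 * k + 1 : ℕ) : ZMod n), ((2 * k + 2 : ℕ) : ZMod n))}).CliqueFree 3 := by
  constructor
  · exact card_part' n hn he
  · intro t ht
    obtain ⟨a, b, c, hab, hac, hbc, rfl⟩ := Finset.card_eq_three.mp ht.2
    have h1 : ((cycleSq n).deleteEdges _).Adj a b :=
      ht.1 (by simp) (by simp) hab
    have h2 : ((cycleSq n).deleteEdges _).Adj a c :=
      ht.1 (by simp) (by simp) hac
    have h3 : ((cycleSq n).deleteEdges _).Adj b c :=
      ht.1 (by simp) (by simp) hbc
    rw [SimpleGraph.deleteEdges_adj] at h1 h2 h3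
    rcases tri' n hn a b c h1.1 h2.1 h3.1 with ⟨x, ha, hb, hc⟩ | ⟨x, ha, hb, hc⟩ |
        ⟨x, ha, hb, hc⟩ | ⟨x, ha, hb, hc⟩ | ⟨x, ha, hb, hc⟩ | ⟨x, ha, hb, hc⟩ <;>
      simp only [ha, hb, hc] at h1 h2 h3 <;>
      obtain ⟨y, hy, hk | hk⟩ := key2' n hn he x <;>
      have hS := memS' n hn he y hy <;>
      rw [hk] at hS <;>
      first
        | exact h1.2 hS
        | exact h2.2 hS
        | exact h3.2 hS
        | exact h1.2 (swap_mem' hS)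
        | exact h2.2 (swap_mem' hS)
        | exact h3.2 (swap_mem' hS)
end

section
/- For n ≥ 7, the minimum number of dependent arcs over all acyclic orientations of the square of the cycle C_n is strictly greater than ⌈n/2⌉. -/
open SimpleGraph

variable {V : Type*}

namespace Aux

variable {G : SimpleGraph V}

lemma rel_irrefl (D : GraphOrientation G) (a : V) : ¬ D.rel a a := fun h => D.asymm h h

lemma rel_ne (D : GraphOrientation G) {a b : V} (h : D.rel a b) : a ≠ b :=
  fun e => rel_irrefl D a (by rw [e] at h ⊢; exact h)

def op (D : GraphOrientation G) : GraphOrientation G where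
  rel u v := D.rel v u
  sub := fun {u v} h => (D.sub h).symm
  cover := fun {u v} h => (D.cover h).symm
  asymm := fun {u v} h h' => D.asymm h' h

lemma op_acyclic {D : GraphOrientation G} (h : D.Acyclic) : (op D).Acyclic := by
  intro v hv
  exact h v (Relation.TransGen.swap _ _ hv)

lemma dep_op {D : GraphOrientation G} {u v : V} : (op D).Dep u v ↔ D.Dep v u := by
  constructor
  · rintro ⟨h1, h2⟩
    refine ⟨h1, ?_⟩
    have := Relation.TransGen.swap _ _ h2
    exact Relation.TransGen.mono (fun a b hab => ⟨hab.1, fun hc => hab.2 ⟨hc.2, hc.1⟩⟩) _ _ this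
  · rintro ⟨h1, h2⟩
    refine ⟨h1, ?_⟩
    have := Relation.TransGen.swap _ _ h2
    exact Relation.TransGen.mono (fun a b hab => ⟨hab.1, fun hc => hab.2 ⟨hc.2, hc.1⟩⟩) _ _ this

lemma depArcs_op {D : GraphOrientation G} : (op D).depArcs = Prod.swap '' D.depArcs := by
  ext ⟨u, v⟩
  simp only [GraphOrientation.depArcs, Set.mem_setOf_eq, Set.mem_image, Prod.exists]
  constructor
  · intro h
    exact ⟨v, u, dep_op.mp h, rfl⟩
  · rintro ⟨a, b, h, hab⟩
    cases hab
    exact dep_op.mpr h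

lemma depCount_op {D : GraphOrientation G} : depCount (op D) = depCount D := by
  unfold depCount
  rw [depArcs_op, Set.ncard_image_of_injective _ Prod.swap_injective]

end Aux

namespace Aux

variable {n : ℕ}

lemma castInj (hn : 7 ≤ n) {a b : ℕ} (ha : a < n) (hb : b < n) (h : (a : ZMod n) = b) :
    a = b := by
  haveI : NeZero n := ⟨by omega⟩
  calc a = (a : ZMod n).val := (ZMod.val_cast_of_lt ha).symm
  _ = (b : ZMod n).val := by rw [h]
  _ = b := ZMod.val_cast_of_lt hb

lemma shift_ne (hn : 7 ≤ n) (i : ZMod n) (a b : ℕ) (ha : a < 7) (hb : b < 7) (hab : a ≠ b) :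
    i + (a : ZMod n) ≠ i + (b : ZMod n) := by
  intro h
  exact hab (castInj hn (by omega) (by omega) (add_left_cancel h))

/-- membership in the triangle T_i -/
def memT (i z : ZMod n) : Prop := z = i ∨ z = i + 1 ∨ z = i + 2

lemma memT_val (hn : 7 ≤ n) {i z : ZMod n} (h : memT i z) :
    ∃ a : ℕ, a ≤ 2 ∧ z = i + (a : ZMod n) := by
  rcases h with h | h | h
  · exact ⟨0, by omega, by simpa using h⟩
  · exact ⟨1, by omega, by simpa using h⟩
  · exact ⟨2, by omega, by simpa using h⟩

lemma F3core (hn : 7 ≤ n) {i i' x y : ZMod n} (hx : memT i x) (hx' : memT i' x)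
    (hy : memT i y) (hy' : memT i' y) (hxy : x ≠ y) :
    i' = i ∨ i' = i + 1 ∨ i = i' + 1 := by
  obtain ⟨a, ha, hxa⟩ := memT_val hn hx
  obtain ⟨a', ha', hxa'⟩ := memT_val hn hx'
  obtain ⟨b, hb, hyb⟩ := memT_val hn hy
  obtain ⟨b', hb', hyb'⟩ := memT_val hn hy'
  have e1 : i + (a : ZMod n) = i' + (a' : ZMod n) := hxa.symm.trans hxa'
  have e2 : i + (b : ZMod n) = i' + (b' : ZMod n) := hyb.symm.trans hyb'
  have key : ((a + b' : ℕ) : ZMod n) = ((b + a' : ℕ) : ZMod n) := by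
    push_cast
    linear_combination e1 - e2
  have keyn : a + b' = b + a' := castInj hn (by omega) (by omega) key
  have hab : a ≠ b := by
    intro h; apply hxy; rw [hxa, hyb, h]
  have tri : a = a' ∨ a = a' + 1 ∨ a' = a + 1 := by omega
  rcases tri with h | h | h
  · left
    subst h
    exact (add_right_cancel e1.symm)
  · right; left
    rw [h] at e1
    push_cast at e1
    linear_combination e1.symm
  · right; right
    rw [h] at e1
    push_cast at e1
    linear_combination e1

lemma memT_succ (hn : 7 ≤ n) {i z : ZMod n} (h : memT i z) (h' : memT (i + 1) z) :
    z = i + 1 ∨ z = i + 2 := by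
  obtain ⟨a, ha, hza⟩ := memT_val hn h
  obtain ⟨a', ha', hza'⟩ := memT_val hn h'
  have e1 : i + (a : ZMod n) = (i + 1) + (a' : ZMod n) := hza.symm.trans hza'
  have key : ((a : ℕ) : ZMod n) = ((a' + 1 : ℕ) : ZMod n) := by
    push_cast; linear_combination e1
  have keyn : a = a' + 1 := castInj hn (by omega) (by omega) key
  interval_cases a
  · omega
  · left; rw [hza]; norm_num
  · right; rw [hza]; norm_num

end Aux

namespace Aux

variable {n : ℕ}

lemma adj_one (hn : 7 ≤ n) (i : ZMod n) : (cycleSq n).Adj i (i + 1) := by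
  show _ ∧ _
  refine ⟨by simpa using shift_ne hn i 0 1 (by omega) (by omega) (by omega), ?_⟩
  right; left; ring

lemma adj_two (hn : 7 ≤ n) (i : ZMod n) : (cycleSq n).Adj i (i + 2) := by
  show _ ∧ _
  refine ⟨by simpa using shift_ne hn i 0 2 (by omega) (by omega) (by omega), ?_⟩
  right; right; right; ring

/-- `Q D i p` : `p` is the transitive (source,sink) arc of the triangle `{i,i+1,i+2}`,
    each disjunct records `p = (src, sink)`, `rel src mid`, `rel mid sink`, `rel src sink`. -/
def Q (D : GraphOrientation (cycleSq n)) (i : ZMod n) (p : ZMod n × ZMod n) : Prop :=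
  (p = (i, i + 2) ∧ D.rel i (i + 1) ∧ D.rel (i + 1) (i + 2) ∧ D.rel i (i + 2)) ∨
  (p = (i + 2, i) ∧ D.rel (i + 2) (i + 1) ∧ D.rel (i + 1) i ∧ D.rel (i + 2) i) ∨
  (p = (i + 1, i + 2) ∧ D.rel (i + 1) i ∧ D.rel i (i + 2) ∧ D.rel (i + 1) (i + 2)) ∨
  (p = (i + 2, i + 1) ∧ D.rel (i + 2) i ∧ D.rel i (i + 1) ∧ D.rel (i + 2) (i + 1)) ∨
  (p = (i, i + 1) ∧ D.rel i (i + 2) ∧ D.rel (i + 2) (i + 1) ∧ D.rel i (i + 1)) ∨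
  (p = (i + 1, i) ∧ D.rel (i + 1) (i + 2) ∧ D.rel (i + 2) i ∧ D.rel (i + 1) i)

variable {D : GraphOrientation (cycleSq n)}

lemma Q_exists (hn : 7 ≤ n) (hac : D.Acyclic) (i : ZMod n) : ∃ p, Q D i p := by
  have a12 : (cycleSq n).Adj (i + 1) (i + 2) := by
    have := adj_one hn (i + 1)
    rwa [show (i + 1) + 1 = i + 2 by ring] at this
  rcases D.cover (adj_one hn i) with h1 | h1 <;>
    rcases D.cover a12 with h2 | h2 <;>
      rcases D.cover (adj_two hn i) with h3 | h3
  · exact ⟨(i, i + 2), Or.inl ⟨rfl, h1, h2, h3⟩⟩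
  · exact absurd (Relation.TransGen.head h1 (Relation.TransGen.head h2
      (Relation.TransGen.single h3))) (hac i)
  · exact ⟨(i, i + 1), Or.inr (Or.inr (Or.inr (Or.inr (Or.inl ⟨rfl, h3, h2, h1⟩))))⟩
  · exact ⟨(i + 2, i + 1), Or.inr (Or.inr (Or.inr (Or.inl ⟨rfl, h3, h1, h2⟩)))⟩
  · exact ⟨(i + 1, i + 2), Or.inr (Or.inr (Or.inl ⟨rfl, h1, h3, h2⟩))⟩
  · exact ⟨(i + 1, i), Or.inr (Or.inr (Or.inr (Or.inr (Or.inr ⟨rfl, h2, h3, h1⟩))))⟩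
  · exact absurd (Relation.TransGen.head h3 (Relation.TransGen.head h2
      (Relation.TransGen.single h1))) (hac i)
  · exact ⟨(i + 2, i), Or.inr (Or.inl ⟨rfl, h2, h1, h3⟩)⟩

lemma Q_unique {i : ZMod n} {p p' : ZMod n × ZMod n} (h : Q D i p) (h' : Q D i p') :
    p = p' := by
  rcases h with ⟨hp, a1, a2, a3⟩ | ⟨hp, a1, a2, a3⟩ | ⟨hp, a1, a2, a3⟩ |
    ⟨hp, a1, a2, a3⟩ | ⟨hp, a1, a2, a3⟩ | ⟨hp, a1, a2, a3⟩ <;>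
  rcases h' with ⟨hq, b1, b2, b3⟩ | ⟨hq, b1, b2, b3⟩ | ⟨hq, b1, b2, b3⟩ |
    ⟨hq, b1, b2, b3⟩ | ⟨hq, b1, b2, b3⟩ | ⟨hq, b1, b2, b3⟩ <;>
  first
    | exact absurd b1 (D.asymm a1) | exact absurd b1 (D.asymm a2) | exact absurd b1 (D.asymm a3)
    | exact absurd b2 (D.asymm a1) | exact absurd b2 (D.asymm a2) | exact absurd b2 (D.asymm a3)
    | exact absurd b3 (D.asymm a1) | exact absurd b3 (D.asymm a2) | exact absurd b3 (D.asymm a3)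
    | (rw [hp, hq])

lemma Q_rel {i : ZMod n} {p : ZMod n × ZMod n} (h : Q D i p) : D.rel p.1 p.2 := by
  rcases h with ⟨hp, _, _, a3⟩ | ⟨hp, _, _, a3⟩ | ⟨hp, _, _, a3⟩ |
    ⟨hp, _, _, a3⟩ | ⟨hp, _, _, a3⟩ | ⟨hp, _, _, a3⟩ <;> rw [hp] <;> exact a3

lemma Q_mem1 {i : ZMod n} {p : ZMod n × ZMod n} (h : Q D i p) : memT i p.1 := by
  rcases h with ⟨hp, -⟩ | ⟨hp, -⟩ | ⟨hp, -⟩ | ⟨hp, -⟩ | ⟨hp, -⟩ | ⟨hp, -⟩ <;> rw [hp]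
  · exact Or.inl rfl
  · exact Or.inr (Or.inr rfl)
  · exact Or.inr (Or.inl rfl)
  · exact Or.inr (Or.inr rfl)
  · exact Or.inl rfl
  · exact Or.inr (Or.inl rfl)

lemma Q_mem2 {i : ZMod n} {p : ZMod n × ZMod n} (h : Q D i p) : memT i p.2 := by
  rcases h with ⟨hp, -⟩ | ⟨hp, -⟩ | ⟨hp, -⟩ | ⟨hp, -⟩ | ⟨hp, -⟩ | ⟨hp, -⟩ <;> rw [hp]
  · exact Or.inr (Or.inr rfl)
  · exact Or.inl rfl
  · exact Or.inr (Or.inr rfl)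
  · exact Or.inr (Or.inl rfl)
  · exact Or.inr (Or.inl rfl)
  · exact Or.inl rfl

lemma Q_dep {i : ZMod n} {p : ZMod n × ZMod n} (h : Q D i p) : p ∈ D.depArcs := by
  have key : ∀ a m b : ZMod n, D.rel a m → D.rel m b → D.rel a b → D.Dep a b := by
    intro a m b h1 h2 h3
    refine ⟨h3, ?_⟩
    have hmb : m ≠ b := rel_ne D h2
    have hma : m ≠ a := (rel_ne D h1).symm
    exact Relation.TransGen.head ⟨h1, fun hc => hmb hc.2⟩
      (Relation.TransGen.single ⟨h2, fun hc => hma hc.1⟩)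
  rcases h with ⟨hp, a1, a2, a3⟩ | ⟨hp, a1, a2, a3⟩ | ⟨hp, a1, a2, a3⟩ |
    ⟨hp, a1, a2, a3⟩ | ⟨hp, a1, a2, a3⟩ | ⟨hp, a1, a2, a3⟩ <;> rw [hp] <;>
    exact key _ _ _ a1 a2 a3

open Classical in
noncomputable def fArc (D : GraphOrientation (cycleSq n)) (i : ZMod n) : ZMod n × ZMod n :=
  if h : ∃ p, Q D i p then h.choose else (0, 0)

lemma fArc_Q (hn : 7 ≤ n) (hac : D.Acyclic) (i : ZMod n) : Q D i (fArc D i) := by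
  have h : ∃ p, Q D i p := Q_exists hn hac i
  rw [fArc]
  rw [dif_pos h]
  exact h.choose_spec

lemma fArc_eq (hn : 7 ≤ n) (hac : D.Acyclic) {i : ZMod n} {p : ZMod n × ZMod n}
    (h : Q D i p) : fArc D i = p :=
  Q_unique (fArc_Q hn hac i) h

end Aux

namespace Aux

variable {n : ℕ} {D : GraphOrientation (cycleSq n)}

lemma Q_edge (hn : 7 ≤ n) {i : ZMod n} {p : ZMod n × ZMod n}
    (h : Q D i p) (h' : Q D (i + 1) p) : p = (i + 1, i + 2) ∨ p = (i + 2, i + 1) := by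
  have h1 := memT_succ hn (Q_mem1 h) (Q_mem1 h')
  have h2 := memT_succ hn (Q_mem2 h) (Q_mem2 h')
  have hne : p.1 ≠ p.2 := rel_ne D (Q_rel h)
  rcases h1 with h1 | h1 <;> rcases h2 with h2 | h2
  · exact absurd (h1.trans h2.symm) hne
  · left; exact Prod.ext h1 h2
  · right; exact Prod.ext h1 h2
  · exact absurd (h1.trans h2.symm) hne

lemma block (hn : 7 ≤ n) (hac : D.Acyclic) (i : ZMod n)
    (hm : fArc D i = fArc D (i + 1)) (hf : fArc D i = (i + 1, i + 2)) :
    D.rel (i + 1) i ∧ D.rel i (i + 2) ∧ D.rel (i + 1) (i + 2) ∧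
      D.rel (i + 1) (i + 3) ∧ D.rel (i + 3) (i + 2) := by
  have hQ := fArc_Q hn hac i
  rw [hf] at hQ
  have hQ' := fArc_Q hn hac (i + 1)
  rw [← hm, hf] at hQ'
  have key1 : D.rel (i + 1) i ∧ D.rel i (i + 2) ∧ D.rel (i + 1) (i + 2) := by
    rcases hQ with ⟨hp, a1, a2, a3⟩ | ⟨hp, a1, a2, a3⟩ | ⟨hp, a1, a2, a3⟩ |
      ⟨hp, a1, a2, a3⟩ | ⟨hp, a1, a2, a3⟩ | ⟨hp, a1, a2, a3⟩ <;>
      simp only [Prod.mk.injEq] at hp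
    · exact absurd hp.1 (by simpa using shift_ne hn i 1 0 (by omega) (by omega) (by omega))
    · exact absurd hp.1 (by simpa using shift_ne hn i 1 2 (by omega) (by omega) (by omega))
    · exact ⟨a1, a2, a3⟩
    · exact absurd hp.1 (by simpa using shift_ne hn i 1 2 (by omega) (by omega) (by omega))
    · exact absurd hp.2 (by simpa using shift_ne hn i 2 1 (by omega) (by omega) (by omega))
    · exact absurd hp.2 (by simpa using shift_ne hn i 2 0 (by omega) (by omega) (by omega))
  have key2 : D.rel (i + 1) (i + 3) ∧ D.rel (i + 3) (i + 2) := by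
    rcases hQ' with ⟨hp, a1, a2, a3⟩ | ⟨hp, a1, a2, a3⟩ | ⟨hp, a1, a2, a3⟩ |
      ⟨hp, a1, a2, a3⟩ | ⟨hp, a1, a2, a3⟩ | ⟨hp, a1, a2, a3⟩ <;>
      simp only [Prod.mk.injEq] at hp
    · exact absurd (show (i : ZMod n) + 2 = i + 3 by linear_combination hp.2)
        (by simpa using shift_ne hn i 2 3 (by omega) (by omega) (by omega))
    · exact absurd (show (i : ZMod n) + 1 = i + 3 by linear_combination hp.1)
        (by simpa using shift_ne hn i 1 3 (by omega) (by omega) (by omega))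
    · exact absurd (show (i : ZMod n) + 1 = i + 2 by linear_combination hp.1)
        (by simpa using shift_ne hn i 1 2 (by omega) (by omega) (by omega))
    · exact absurd (show (i : ZMod n) + 1 = i + 3 by linear_combination hp.1)
        (by simpa using shift_ne hn i 1 3 (by omega) (by omega) (by omega))
    · rw [show (i + 1) + 2 = i + 3 by ring] at a1
      rw [show (i + 1) + 2 = i + 3 by ring, show (i + 1) + 1 = i + 2 by ring] at a2
      exact ⟨a1, a2⟩
    · exact absurd (show (i : ZMod n) + 1 = i + 2 by linear_combination hp.1)
        (by simpa using shift_ne hn i 1 2 (by omega) (by omega) (by omega))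
  exact ⟨key1.1, key1.2.1, key1.2.2, key2.1, key2.2⟩

lemma propag (hn : 7 ≤ n) (hac : D.Acyclic) {i : ZMod n}
    (hm : fArc D i = fArc D (i + 1)) (hm2 : fArc D (i + 2) = fArc D (i + 3))
    (hf : fArc D i = (i + 1, i + 2)) : fArc D (i + 2) = (i + 3, i + 4) := by
  obtain ⟨-, -, -, -, h5⟩ := block hn hac i hm hf
  have hQ2 := fArc_Q hn hac (i + 2)
  have hQ3 := fArc_Q hn hac (i + 3)
  rw [← hm2] at hQ3
  rw [show i + 3 = (i + 2) + 1 by ring] at hQ3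
  have e3 : (i + 2) + 1 = i + 3 := by ring
  have e4 : (i + 2) + 2 = i + 4 := by ring
  rcases Q_edge hn hQ2 hQ3 with he | he
  · rw [he, e3, e4]
  · exfalso
    rw [he] at hQ2
    set j := i + 2 with hj
    rcases hQ2 with ⟨hp, a1, a2, a3⟩ | ⟨hp, a1, a2, a3⟩ | ⟨hp, a1, a2, a3⟩ |
      ⟨hp, a1, a2, a3⟩ | ⟨hp, a1, a2, a3⟩ | ⟨hp, a1, a2, a3⟩ <;>
      simp only [Prod.mk.injEq] at hp
    · exact absurd hp.1 (by simpa using shift_ne hn j 2 0 (by omega) (by omega) (by omega))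
    · exact absurd hp.2 (by simpa using shift_ne hn j 1 0 (by omega) (by omega) (by omega))
    · exact absurd hp.1 (by simpa using shift_ne hn j 2 1 (by omega) (by omega) (by omega))
    · rw [show j + 1 = i + 3 by rw [hj]; ring] at a2
      exact absurd a2 (D.asymm h5)
    · exact absurd hp.1 (by simpa using shift_ne hn j 2 0 (by omega) (by omega) (by omega))
    · exact absurd hp.1 (by simpa using shift_ne hn j 2 1 (by omega) (by omega) (by omega))

end Aux

namespace Aux

variable {n : ℕ} {D : GraphOrientation (cycleSq n)}

lemma Q_op {i : ZMod n} {p : ZMod n × ZMod n} (h : Q D i p) : Q (op D) i p.swap := by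
  rcases h with ⟨hp, a1, a2, a3⟩ | ⟨hp, a1, a2, a3⟩ | ⟨hp, a1, a2, a3⟩ |
    ⟨hp, a1, a2, a3⟩ | ⟨hp, a1, a2, a3⟩ | ⟨hp, a1, a2, a3⟩ <;> rw [hp]
  · exact Or.inr (Or.inl ⟨rfl, a2, a1, a3⟩)
  · exact Or.inl ⟨rfl, a2, a1, a3⟩
  · exact Or.inr (Or.inr (Or.inr (Or.inl ⟨rfl, a2, a1, a3⟩)))
  · exact Or.inr (Or.inr (Or.inl ⟨rfl, a2, a1, a3⟩))
  · exact Or.inr (Or.inr (Or.inr (Or.inr (Or.inr ⟨rfl, a2, a1, a3⟩))))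
  · exact Or.inr (Or.inr (Or.inr (Or.inr (Or.inl ⟨rfl, a2, a1, a3⟩))))

lemma fArc_op (hn : 7 ≤ n) (hac : D.Acyclic) (i : ZMod n) :
    fArc (op D) i = (fArc D i).swap :=
  fArc_eq hn (op_acyclic hac) (Q_op (fArc_Q hn hac i))

lemma M_op (hn : 7 ≤ n) (hac : D.Acyclic) (i : ZMod n) :
    (fArc (op D) i = fArc (op D) (i + 1)) ↔ (fArc D i = fArc D (i + 1)) := by
  rw [fArc_op hn hac, fArc_op hn hac]
  exact ⟨fun h => Prod.swap_injective h, fun h => by rw [h]⟩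

lemma fiber (hn : 7 ≤ n) (hac : D.Acyclic) {i i' : ZMod n}
    (h : fArc D i = fArc D i') : i' = i ∨ i' = i + 1 ∨ i = i' + 1 := by
  have hQ := fArc_Q hn hac i
  have hQ' := fArc_Q hn hac i'
  rw [← h] at hQ'
  exact F3core hn (Q_mem1 hQ) (Q_mem1 hQ') (Q_mem2 hQ) (Q_mem2 hQ')
    (rel_ne D (Q_rel hQ))

lemma M_indep (hn : 7 ≤ n) (hac : D.Acyclic) {i : ZMod n}
    (h : fArc D i = fArc D (i + 1)) (h' : fArc D (i + 1) = fArc D (i + 1 + 1)) : False := by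
  have h2 := h.trans h'
  rcases fiber hn hac h2 with hc | hc | hc
  · exact absurd (show i + ((2:ℕ):ZMod n) = i + ((0:ℕ):ZMod n) by push_cast; linear_combination hc)
      (shift_ne hn i 2 0 (by omega) (by omega) (by omega))
  · exact absurd (show i + ((2:ℕ):ZMod n) = i + ((1:ℕ):ZMod n) by push_cast; linear_combination hc)
      (shift_ne hn i 2 1 (by omega) (by omega) (by omega))
  · exact absurd (show i + ((0:ℕ):ZMod n) = i + ((3:ℕ):ZMod n) by push_cast; linear_combination hc)
      (shift_ne hn i 0 3 (by omega) (by omega) (by omega))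

section Counting

variable (D)

noncomputable def Mset (n' : ℕ) (D : GraphOrientation (cycleSq n')) [NeZero n'] :
    Finset (ZMod n') :=
  Finset.univ.filter (fun i => fArc D i = fArc D (i + 1))

variable [NeZero n]

lemma mem_Mset {i : ZMod n} : i ∈ Mset n D ↔ fArc D i = fArc D (i + 1) := by
  simp [Mset]

lemma count1 (hn : 7 ≤ n) (hac : D.Acyclic) :
    n ≤ (Finset.univ.image (fArc D)).card + (Mset n D).card := by
  classical
  have := Finset.card_le_card_of_injOn
    (f := fun i : ZMod n => if fArc D (i - 1) = fArc D i
      then Sum.inr (i - 1) else Sum.inl (fArc D i))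
    (s := Finset.univ) (t := (Finset.univ.image (fArc D)).disjSum (Mset n D))
    ?_ ?_
  · rwa [Finset.card_univ, ZMod.card, Finset.card_disjSum] at this
  · intro a _
    dsimp only
    by_cases hca : fArc D (a - 1) = fArc D a
    · rw [if_pos hca]
      apply Finset.inr_mem_disjSum.mpr
      rw [mem_Mset]
      rwa [sub_add_cancel]
    · rw [if_neg hca]
      exact Finset.inl_mem_disjSum.mpr (Finset.mem_image_of_mem _ (Finset.mem_univ a))
  · intro a _ b _ hab
    dsimp only at hab
    by_cases hca : fArc D (a - 1) = fArc D a <;> by_cases hcb : fArc D (b - 1) = fArc D b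
    · rw [if_pos hca, if_pos hcb] at hab
      have h2 : a - 1 = b - 1 := Sum.inr.inj hab
      have := congrArg (· + 1) h2
      simpa [sub_add_cancel] using this
    · rw [if_pos hca, if_neg hcb] at hab; exact absurd hab (by simp)
    · rw [if_neg hca, if_pos hcb] at hab; exact absurd hab (by simp)
    · rw [if_neg hca, if_neg hcb] at hab
      have h := Sum.inl.inj hab
      rcases fiber hn hac h with hc | hc | hc
      · exact hc.symm
      · exfalso; apply hcb; rw [hc] at h; rw [hc, add_sub_cancel_right]; exact h
      · exfalso; apply hca; rw [hc] at h; rw [hc, add_sub_cancel_right]; exact h.symm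

lemma pairs_card (hn : 7 ≤ n) (hac : D.Acyclic) :
    ((Mset n D).biUnion fun m => ({m, m + 1} : Finset (ZMod n))).card = 2 * (Mset n D).card := by
  classical
  rw [Finset.card_biUnion]
  · rw [Finset.sum_congr rfl (fun m _ => Finset.card_pair
      (by simpa using shift_ne hn m 0 1 (by omega) (by omega) (by omega)))]
    rw [Finset.sum_const, smul_eq_mul, mul_comm]
  · intro x hx y hy hne
    rw [Function.onFun, Finset.disjoint_left]
    intro z hzx hzy
    rw [Finset.mem_coe, mem_Mset] at hx hy
    simp only [Finset.mem_insert, Finset.mem_singleton] at hzx hzy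
    rcases hzx with rfl | rfl <;> rcases hzy with h | h
    · exact hne h
    · rw [h] at hx
      exact M_indep hn hac hy hx
    · rw [← h] at hy
      exact M_indep hn hac hx hy
    · exact hne (by exact add_right_cancel h)

end Counting

end Aux

namespace Aux

variable {n : ℕ} {D : GraphOrientation (cycleSq n)} [NeZero n]

lemma fwd_chain (hn : 7 ≤ n) (hac : D.Acyclic) {i0 : ZMod n} {N : ℕ}
    (hmem : ∀ k : ℕ, k < N → i0 + ((2 * k : ℕ) : ZMod n) ∈ Mset n D)
    (hfwd : fArc D i0 = (i0 + 1, i0 + 2)) :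
    ∀ k : ℕ, k < N →
      fArc D (i0 + ((2 * k : ℕ) : ZMod n)) =
        (i0 + ((2 * k : ℕ) : ZMod n) + 1, i0 + ((2 * k : ℕ) : ZMod n) + 2) := by
  intro k
  induction k with
  | zero => intro _; simpa using hfwd
  | succ k ih =>
    intro hk
    have hk' : k < N := by omega
    set j := i0 + ((2 * k : ℕ) : ZMod n) with hj
    have ej : i0 + ((2 * (k + 1) : ℕ) : ZMod n) = j + 2 := by
      rw [hj]; push_cast; ring
    have hmj : fArc D j = fArc D (j + 1) := (mem_Mset D).mp (hmem k hk')
    have hmj2 : fArc D (j + 2) = fArc D (j + 3) := by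
      have h2 := hmem (k + 1) hk
      rw [ej] at h2
      have := (mem_Mset D).mp h2
      rwa [show j + 2 + 1 = j + 3 by ring] at this
    have := propag hn hac hmj hmj2 (ih hk')
    rw [ej, this]
    exact Prod.ext (by ring) (by ring)

lemma evenCore (hn : 7 ≤ n) (hac : D.Acyclic) (he : n % 2 = 0)
    (hstep : ∀ i, i ∈ Mset n D → i + 2 ∈ Mset n D) {i0 : ZMod n}
    (hi0 : i0 ∈ Mset n D) (hfwd : fArc D i0 = (i0 + 1, i0 + 2)) : False := by
  have hmem : ∀ k : ℕ, i0 + ((2 * k : ℕ) : ZMod n) ∈ Mset n D := by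
    intro k
    induction k with
    | zero => simpa using hi0
    | succ k ih =>
      have := hstep _ ih
      rwa [show i0 + ((2 * k : ℕ) : ZMod n) + 2 = i0 + ((2 * (k + 1) : ℕ) : ZMod n) by
        push_cast; ring] at this
  have harc : ∀ k : ℕ, D.rel (i0 + ((2 * k : ℕ) : ZMod n) + 1)
      (i0 + ((2 * k : ℕ) : ZMod n) + 3) := by
    intro k
    have hf := fwd_chain hn hac (N := k + 1) (fun l _ => hmem l) hfwd k (by omega)
    exact (block hn hac _ ((mem_Mset D).mp (hmem k)) hf).2.2.2.1
  have chain : ∀ k : ℕ, Relation.TransGen D.rel (i0 + 1)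
      (i0 + ((2 * (k + 1) : ℕ) : ZMod n) + 1) := by
    intro k
    induction k with
    | zero =>
      have := harc 0
      apply Relation.TransGen.single
      rw [show i0 + ((2 * (0 + 1) : ℕ) : ZMod n) + 1 = i0 + ((2 * (0:ℕ) : ℕ) : ZMod n) + 3 by
        push_cast; ring]
      simpa using this
    | succ k ih =>
      refine Relation.TransGen.tail ih ?_
      have := harc (k + 1)
      rwa [show i0 + ((2 * (k + 1) : ℕ) : ZMod n) + 3 =
        i0 + ((2 * (k + 1 + 1) : ℕ) : ZMod n) + 1 by push_cast; ring] at this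
  have hfin := chain (n / 2 - 1)
  rw [show (2 * (n / 2 - 1 + 1) : ℕ) = n by omega] at hfin
  rw [ZMod.natCast_self, add_zero] at hfin
  exact hac _ hfin
end Aux

namespace Aux

variable {n : ℕ} {D : GraphOrientation (cycleSq n)} [NeZero n]

lemma cast_ne_zero_small (hn : 7 ≤ n) {k : ℕ} (h1 : 0 < k) (h2 : k < n) :
    ((k : ℕ) : ZMod n) ≠ 0 := by
  intro h
  have := (ZMod.natCast_eq_zero_iff k n).mp h
  have := Nat.le_of_dvd h1 this
  omega

lemma oddCore (hn : 7 ≤ n) (hac : D.Acyclic) (ho : n % 2 = 1)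
    (hdep : depCount D ≤ (n + 1) / 2) {u : ZMod n}
    (hchain : ∀ t : ℕ, t < (n - 1) / 2 → u + 1 + ((2 * t : ℕ) : ZMod n) ∈ Mset n D)
    (hall : ∀ z : ZMod n, z ≠ u → ∃ m ∈ Mset n D, z = m ∨ z = m + 1)
    (hfwd : fArc D (u + 1) = (u + 2, u + 3)) : False := by
  classical
  set N := (n - 1) / 2 with hN
  have hNn : 2 * N = n - 1 := by omega
  have hfwd' : fArc D (u + 1) = ((u + 1) + 1, (u + 1) + 2) := by
    rw [hfwd]; exact Prod.ext (by ring) (by ring)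
  -- all blocks on the chain are forward
  have hf := fwd_chain hn hac (i0 := u + 1) (N := N) (fun t ht => hchain t ht) hfwd'
  -- the arcs of the long path
  have harc : ∀ t : ℕ, t < N → D.rel (u + 1 + ((2 * t : ℕ) : ZMod n) + 1)
      (u + 1 + ((2 * t : ℕ) : ZMod n) + 3) := by
    intro t ht
    exact (block hn hac _ ((mem_Mset D).mp (hchain t ht)) (hf t ht)).2.2.2.1
  -- the candidate extra dependent arc
  have arc0 : D.rel (u + 2) (u + 1) := by
    have := (block hn hac _ ((mem_Mset D).mp (hchain 0 (by omega)))
      (by simpa using hfwd')).1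
    have e : u + 1 + ((2 * 0 : ℕ) : ZMod n) = u + 1 := by push_cast; ring
    rw [e] at this
    rwa [show (u + 1) + 1 = u + 2 by ring] at this
  set relq : ZMod n → ZMod n → Prop :=
    fun a b => D.rel a b ∧ ¬(a = u + 2 ∧ b = u + 1) with hrelq
  have harcq : ∀ t : ℕ, t < N →
      relq (u + 2 + ((2 * t : ℕ) : ZMod n)) (u + 2 + ((2 * (t + 1) : ℕ) : ZMod n)) := by
    intro t ht
    constructor
    · have := harc t ht
      rwa [show u + 1 + ((2 * t : ℕ) : ZMod n) + 1 = u + 2 + ((2 * t : ℕ) : ZMod n) by ring,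
        show u + 1 + ((2 * t : ℕ) : ZMod n) + 3 = u + 2 + ((2 * (t + 1) : ℕ) : ZMod n) by
          push_cast; ring] at this
    · rintro ⟨ha, hb⟩
      refine cast_ne_zero_small hn (k := 3) (by omega) (by omega) ?_
      push_cast
      push_cast at ha hb
      linear_combination hb - ha
  have chain : ∀ k : ℕ, k < N →
      Relation.TransGen relq (u + 2) (u + 2 + ((2 * (k + 1) : ℕ) : ZMod n)) := by
    intro k
    induction k with
    | zero =>
      intro hk
      have := harcq 0 hk
      apply Relation.TransGen.single
      rwa [show u + 2 + ((2 * 0 : ℕ) : ZMod n) = u + 2 by push_cast; ring] at this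
    | succ k ih =>
      intro hk
      exact Relation.TransGen.tail (ih (by omega)) (harcq (k + 1) hk)
  have hpath : Relation.TransGen relq (u + 2) (u + 1) := by
    have := chain (N - 1) (by omega)
    rwa [show u + 2 + ((2 * (N - 1 + 1) : ℕ) : ZMod n) = u + 1 by
      rw [show 2 * (N - 1 + 1) = n - 1 by omega]
      have hc : ((n - 1 : ℕ) : ZMod n) + 1 = 0 := by
        rw [show (1 : ZMod n) = ((1 : ℕ) : ZMod n) by push_cast; ring, ← Nat.cast_add,
          show n - 1 + 1 = n by omega, ZMod.natCast_self]
      linear_combination hc] at this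
  have hq_dep : ((u + 2, u + 1) : ZMod n × ZMod n) ∈ D.depArcs := ⟨arc0, hpath⟩
  -- identify Mset with the chain
  have hMle : (Mset n D).card ≤ N := by
    have h2 := pairs_card (D := D) hn hac
    have h3 : ((Mset n D).biUnion fun m => ({m, m + 1} : Finset (ZMod n))).card ≤ n := by
      have := Finset.card_le_card (Finset.subset_univ
        ((Mset n D).biUnion fun m => ({m, m + 1} : Finset (ZMod n))))
      rwa [Finset.card_univ, ZMod.card] at this
    omega
  have hMeq : (Finset.range N).image (fun t => u + 1 + ((2 * t : ℕ) : ZMod n)) = Mset n D := by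
    apply Finset.eq_of_subset_of_card_le
    · intro z hz
      obtain ⟨t, ht, rfl⟩ := Finset.mem_image.mp hz
      exact hchain t (Finset.mem_range.mp ht)
    · have hcard : ((Finset.range N).image
          (fun t => u + 1 + ((2 * t : ℕ) : ZMod n))).card = N := by
        rw [Finset.card_image_of_injOn, Finset.card_range]
        intro s hs t ht hst
        simp only [Finset.coe_range, Set.mem_Iio] at hs ht
        have : ((2 * s : ℕ) : ZMod n) = ((2 * t : ℕ) : ZMod n) := by
          linear_combination hst
        have := castInj hn (by omega) (by omega) this
        omega
      omega
  -- value of fArc at u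
  have rel2 : D.rel (u + 1) u := by
    have hb := block hn hac _ ((mem_Mset D).mp (hchain (N - 1) (by omega)))
      (hf (N - 1) (by omega))
    have h5 := hb.2.2.2.2
    have e1 : u + 1 + ((2 * (N - 1) : ℕ) : ZMod n) + 3 = u + 1 := by
      rw [show 2 * (N - 1) = n - 3 by omega]
      have hc : ((n - 3 : ℕ) : ZMod n) + 3 = 0 := by
        rw [show (3 : ZMod n) = ((3 : ℕ) : ZMod n) by push_cast; ring, ← Nat.cast_add,
          show n - 3 + 3 = n by omega, ZMod.natCast_self]
      linear_combination hc
    have e2 : u + 1 + ((2 * (N - 1) : ℕ) : ZMod n) + 2 = u := by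
      linear_combination e1
    rwa [e1, e2] at h5
  have rel3 : D.rel (u + 2) u := by
    rcases D.cover (adj_two hn u) with hc | hc
    · exact absurd (Relation.TransGen.head hc (Relation.TransGen.head arc0
        (Relation.TransGen.single rel2))) (hac u)
    · exact hc
  have hfu : fArc D u = (u + 2, u) :=
    fArc_eq hn hac (Or.inr (Or.inl ⟨rfl, arc0, rel2, rel3⟩))
  -- the extra arc is not in the image of fArc
  have hnotin : ((u + 2, u + 1) : ZMod n × ZMod n) ∉ Finset.univ.image (fArc D) := by
    intro hmem
    obtain ⟨i, -, hi⟩ := Finset.mem_image.mp hmem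
    by_cases hiu : i = u
    · rw [hiu, hfu] at hi
      have := (Prod.ext_iff.mp hi).2
      exact absurd (show u + ((0 : ℕ) : ZMod n) = u + ((1 : ℕ) : ZMod n) by
          push_cast; linear_combination this)
        (shift_ne hn u 0 1 (by omega) (by omega) (by omega))
    · obtain ⟨m, hm, hzm⟩ := hall i hiu
      have hfm : fArc D i = fArc D m := by
        rcases hzm with rfl | rfl
        · rfl
        · exact ((mem_Mset D).mp hm).symm
      obtain ⟨t, ht, rfl⟩ : ∃ t, t < N ∧ u + 1 + ((2 * t : ℕ) : ZMod n) = m := by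
        have := hMeq ▸ hm
        obtain ⟨t, ht, hteq⟩ := Finset.mem_image.mp this
        exact ⟨t, Finset.mem_range.mp ht, hteq⟩
      rw [hfm, hf t ht] at hi
      have h1 := (Prod.ext_iff.mp hi).1
      have h2 := (Prod.ext_iff.mp hi).2
      refine cast_ne_zero_small hn (k := 2) (by omega) (by omega) ?_
      push_cast
      push_cast at h1 h2
      linear_combination h2 - h1
  -- final count
  have himg : (n + 1) / 2 ≤ (Finset.univ.image (fArc D)).card := by
    have h1 := count1 (D := D) hn hac
    omega
  have hsub : insert ((u + 2, u + 1) : ZMod n × ZMod n)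
      (↑(Finset.univ.image (fArc D)) : Set (ZMod n × ZMod n)) ⊆ D.depArcs := by
    intro p hp
    rcases Set.mem_insert_iff.mp hp with rfl | hp
    · exact hq_dep
    · obtain ⟨i, -, rfl⟩ := Finset.mem_image.mp (Finset.mem_coe.mp hp)
      exact Q_dep (fArc_Q hn hac i)
  have hge : (Finset.univ.image (fArc D)).card + 1 ≤ depCount D := by
    have h1 : (insert ((u + 2, u + 1) : ZMod n × ZMod n)
        (↑(Finset.univ.image (fArc D)) : Set (ZMod n × ZMod n))).ncard =
        (Finset.univ.image (fArc D)).card + 1 := by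
      rw [Set.ncard_insert_of_notMem (by simpa using hnotin) (Set.toFinite _),
        Set.ncard_coe_finset]
    calc (Finset.univ.image (fArc D)).card + 1 = _ := h1.symm
      _ ≤ D.depArcs.ncard := Set.ncard_le_ncard hsub (Set.toFinite _)
  omega
end Aux

namespace Aux

variable {n : ℕ}

lemma main (hn : 7 ≤ n) (D : GraphOrientation (cycleSq n)) (hac : D.Acyclic) :
    (n + 1) / 2 < depCount D := by
  haveI : NeZero n := ⟨by omega⟩
  classical
  by_contra hle
  push_neg at hle
  have himg_le : (Finset.univ.image (fArc D)).card ≤ (n + 1) / 2 := by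
    have hsub : (↑(Finset.univ.image (fArc D)) : Set (ZMod n × ZMod n)) ⊆ D.depArcs := by
      intro p hp
      obtain ⟨i, -, rfl⟩ := Finset.mem_image.mp (Finset.mem_coe.mp hp)
      exact Q_dep (fArc_Q hn hac i)
    have h2 := Set.ncard_le_ncard hsub (Set.toFinite _)
    rw [Set.ncard_coe_finset] at h2
    exact le_trans h2 hle
  have hc1 := count1 (D := D) hn hac
  have hMge : n / 2 ≤ (Mset n D).card := by omega
  have hpair := pairs_card (D := D) hn hac
  have hble : ((Mset n D).biUnion fun m => ({m, m + 1} : Finset (ZMod n))).card ≤ n := by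
    have := Finset.card_le_card (Finset.subset_univ
      ((Mset n D).biUnion fun m => ({m, m + 1} : Finset (ZMod n))))
    rwa [Finset.card_univ, ZMod.card] at this
  have hMop : Mset n (op D) = Mset n D := Finset.ext fun i => by
    rw [mem_Mset, mem_Mset, M_op hn hac]
  rcases Nat.even_or_odd n with he | hoo
  · -- n even
    have he2 : n % 2 = 0 := Nat.even_iff.mp he
    have hstep : ∀ i, i ∈ Mset n D → i + 2 ∈ Mset n D := by
      intro i hi
      by_contra h2
      have hsub2 : ((Mset n D).biUnion fun m => ({m, m + 1} : Finset (ZMod n))) ⊆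
          Finset.univ.erase (i + 2) := by
        intro z hz
        obtain ⟨m, hm, hzm⟩ := Finset.mem_biUnion.mp hz
        simp only [Finset.mem_insert, Finset.mem_singleton] at hzm
        rw [Finset.mem_erase]
        refine ⟨?_, Finset.mem_univ z⟩
        rcases hzm with rfl | rfl
        · intro hzz; rw [hzz] at hm; exact h2 hm
        · intro hzz
          have hm1 : m = i + 1 := by linear_combination hzz
          rw [hm1] at hm
          exact M_indep hn hac ((mem_Mset D).mp hi) ((mem_Mset D).mp hm)
      have := Finset.card_le_card hsub2
      rw [Finset.card_erase_of_mem (Finset.mem_univ _), Finset.card_univ, ZMod.card] at this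
      omega
    obtain ⟨i0, hi0⟩ := Finset.card_pos.mp (show 0 < (Mset n D).card by omega)
    have hq' := fArc_Q hn hac (i0 + 1)
    rw [← (mem_Mset D).mp ((mem_Mset D).mpr ((mem_Mset D).mp hi0))] at hq'
    rcases Q_edge hn (fArc_Q hn hac i0) hq' with hfw | hbk
    · exact evenCore hn hac he2 hstep hi0 hfw
    · refine evenCore (D := op D) hn (op_acyclic hac) he2 ?_ (i0 := i0) ?_ ?_
      · intro i hi; rw [hMop] at hi ⊢; exact hstep i hi
      · rw [hMop]; exact hi0
      · rw [fArc_op hn hac, hbk, Prod.swap_prod_mk]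
  · -- n odd
    have ho2 : n % 2 = 1 := Nat.odd_iff.mp hoo
    have hMle : (Mset n D).card ≤ (n - 1) / 2 := by omega
    have hBcard : ((Mset n D).biUnion fun m => ({m, m + 1} : Finset (ZMod n))).card = n - 1 := by
      omega
    have hnsub : ¬ (Finset.univ : Finset (ZMod n)) ⊆
        ((Mset n D).biUnion fun m => ({m, m + 1} : Finset (ZMod n))) := by
      intro hs
      have := Finset.card_le_card hs
      rw [Finset.card_univ, ZMod.card] at this
      omega
    obtain ⟨u, -, hu⟩ := Finset.not_subset.mp hnsub
    have hBe : ((Mset n D).biUnion fun m => ({m, m + 1} : Finset (ZMod n))) =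
        Finset.univ.erase u := by
      apply Finset.eq_of_subset_of_card_le
      · intro z hz
        exact Finset.mem_erase.mpr ⟨fun hzz => hu (hzz ▸ hz), Finset.mem_univ z⟩
      · rw [Finset.card_erase_of_mem (Finset.mem_univ _), Finset.card_univ, ZMod.card]
        omega
    have hall : ∀ z : ZMod n, z ≠ u → ∃ m ∈ Mset n D, z = m ∨ z = m + 1 := by
      intro z hz
      have hzB : z ∈ ((Mset n D).biUnion fun m => ({m, m + 1} : Finset (ZMod n))) := by
        rw [hBe]; exact Finset.mem_erase.mpr ⟨hz, Finset.mem_univ z⟩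
      obtain ⟨m, hm, hzm⟩ := Finset.mem_biUnion.mp hzB
      simp only [Finset.mem_insert, Finset.mem_singleton] at hzm
      exact ⟨m, hm, hzm⟩
    have huM : u ∉ Mset n D := fun hm =>
      hu (Finset.mem_biUnion.mpr ⟨u, hm, by simp⟩)
    have hu1 : u + 1 ∈ Mset n D := by
      have hne : u + 1 ≠ u := by
        simpa using shift_ne hn u 1 0 (by omega) (by omega) (by omega)
      obtain ⟨m, hm, hzm⟩ := hall (u + 1) hne
      rcases hzm with rfl | hzm
      · exact hm
      · have : m = u := by linear_combination hzm.symm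
        rw [this] at hm
        exact absurd hm huM
    have hchain : ∀ t : ℕ, t < (n - 1) / 2 → u + 1 + ((2 * t : ℕ) : ZMod n) ∈ Mset n D := by
      intro t
      induction t with
      | zero => intro _; simpa using hu1
      | succ t ih =>
        intro ht
        have hprev := ih (by omega)
        have hi2 : (u + 1 + ((2 * t : ℕ) : ZMod n)) + 2 =
            u + 1 + ((2 * (t + 1) : ℕ) : ZMod n) := by push_cast; ring
        have hne : (u + 1 + ((2 * t : ℕ) : ZMod n)) + 2 ≠ u := by
          intro hh
          refine cast_ne_zero_small hn (k := 2 * t + 3) (by omega) (by omega) ?_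
          push_cast
          push_cast at hh
          linear_combination hh
        obtain ⟨m, hm, hzm⟩ := hall _ hne
        rcases hzm with heq | heq
        · rw [hi2] at heq; rw [heq]; exact hm
        · have hm1 : m = u + 1 + ((2 * t : ℕ) : ZMod n) + 1 := by linear_combination -heq
          rw [hm1] at hm
          exact absurd ((mem_Mset D).mp hm)
            (fun hx => M_indep hn hac ((mem_Mset D).mp hprev) hx)
    have hq' := fArc_Q hn hac ((u + 1) + 1)
    rw [← (mem_Mset D).mp hu1] at hq'
    rcases Q_edge hn (fArc_Q hn hac (u + 1)) hq' with hfw | hbk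
    · refine oddCore hn hac ho2 hle hchain hall ?_
      rw [hfw]; exact Prod.ext (by ring) (by ring)
    · refine oddCore (D := op D) hn (op_acyclic hac) ho2 ?_ (u := u) ?_ ?_ ?_
      · rw [depCount_op]; exact hle
      · intro t ht; rw [hMop]; exact hchain t ht
      · intro z hz
        obtain ⟨m, hm, h⟩ := hall z hz
        exact ⟨m, by rw [hMop]; exact hm, h⟩
      · rw [fArc_op hn hac, hbk, Prod.swap_prod_mk]
        exact Prod.ext (by ring) (by ring)

lemma exists_acyclic (hn : 7 ≤ n) :
    ∃ D : GraphOrientation (cycleSq n), D.Acyclic := by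
  haveI : NeZero n := ⟨by omega⟩
  refine ⟨⟨fun u v => (cycleSq n).Adj u v ∧ u.val < v.val,
    fun {u v} h => h.1, fun {u v} h => ?_, fun {u v} h h' => by omega⟩, ?_⟩
  · rcases lt_or_gt_of_ne (fun hv : u.val = v.val => h.ne (ZMod.val_injective n hv)) with hlt | hlt
    · exact Or.inl ⟨h, hlt⟩
    · exact Or.inr ⟨h.symm, hlt⟩
  · intro v hv
    have key : ∀ a b : ZMod n, Relation.TransGen
        (fun u v : ZMod n => (cycleSq n).Adj u v ∧ u.val < v.val) a b → a.val < b.val := by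
      intro a b h
      induction h with
      | single h => exact h.2
      | tail _ h ih => exact ih.trans h.2
    exact absurd (key v v hv) (lt_irrefl _)

end Aux

/-- For `n ≥ 7`, `d_min(C_n^2) > ⌈n/2⌉`. -/
theorem stmt8 (n : ℕ) (hn : 7 ≤ n) :
    (n + 1) / 2 < dmin (cycleSq n) := by
  have hne : {k | ∃ D : GraphOrientation (cycleSq n), D.Acyclic ∧ depCount D = k}.Nonempty := by
    obtain ⟨D, hac⟩ := Aux.exists_acyclic hn
    exact ⟨depCount D, D, hac, rfl⟩
  obtain ⟨D, hac, hD⟩ := Nat.sInf_mem hne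
  have heq : dmin (cycleSq n) = depCount D := hD.symm
  rw [heq]
  exact Aux.main hn D hac
end

section
/- Let D be an acyclic orientation of C_n^2 for even n ≥ 8 such that the set of underlying edges of the dependent arcs is exactly {v_1v_2, v_3v_4, …, v_{n−1}v_0}. Then no vertex v_i satisfies that one of the cycle edges v_{i−1}v_i, v_iv_{i+1} is directed into v_i and the other out of v_i. -/
open SimpleGraph

variable {V : Type*}

/-- For even `n ≥ 8`: if `D` is an acyclic orientation of `C_n^2` whose dependent arcs
have underlying edge set exactly `{v_1v_2, v_3v_4, …, v_{n-1}v_0}`, then no vertex has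
one incident cycle edge directed in and the other directed out. -/
theorem stmt16 (n : ℕ) (hn : 8 ≤ n) (he : Even n)
    (D : GraphOrientation (cycleSq n)) (hD : D.Acyclic)
    (hF : {e : Sym2 (ZMod n) | ∃ u v, D.Dep u v ∧ e = s(u, v)} =
      {e : Sym2 (ZMod n) | ∃ k : ℕ, k < n / 2 ∧
        e = s(((2 * k + 1 : ℕ) : ZMod n), ((2 * k + 2 : ℕ) : ZMod n))}) :
    ∀ i : ZMod n,
      ¬ ((D.rel (i - 1) i ∧ D.rel i (i + 1)) ∨ (D.rel (i + 1) i ∧ D.rel i (i - 1))) := by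
  haveI : NeZero n := ⟨by omega⟩
  have h1 : (1 : ZMod n) ≠ 0 := by
    have := (ZMod.natCast_eq_zero_iff 1 n).not.mpr (fun hd => by have := Nat.le_of_dvd (by omega) hd; omega)
    simpa using this
  have h2 : (2 : ZMod n) ≠ 0 := by
    have := (ZMod.natCast_eq_zero_iff 2 n).not.mpr (fun hd => by have := Nat.le_of_dvd (by omega) hd; omega)
    simpa using this
  have h3 : (3 : ZMod n) ≠ 0 := by
    have := (ZMod.natCast_eq_zero_iff 3 n).not.mpr (fun hd => by have := Nat.le_of_dvd (by omega) hd; omega)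
    simpa using this
  intro i h
  have key : ∀ a b : ZMod n, (b - a = 2 ∨ a - b = 2) → D.rel a i → D.rel i b → False := by
    intro a b hab hai hib
    have hne : a ≠ b := by
      intro e
      subst e
      rcases hab with h' | h' <;> simp only [sub_self] at h' <;> exact h2 h'.symm
    have hadj : (cycleSq n).Adj a b := ⟨hne, by tauto⟩
    rcases D.cover hadj with hr | hr
    · -- a → b is a dependent arc
      have hdep : D.Dep a b := by
        refine ⟨hr, Relation.TransGen.head ⟨hai, ?_⟩ (Relation.TransGen.single ⟨hib, ?_⟩)⟩
        · rintro ⟨-, hc⟩; exact (D.sub hib).ne hc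
        · rintro ⟨hc, -⟩; exact (D.sub hai).ne hc.symm
      have hmem : s(a, b) ∈ {e : Sym2 (ZMod n) | ∃ u v, D.Dep u v ∧ e = s(u, v)} :=
        ⟨a, b, hdep, rfl⟩
      rw [hF] at hmem
      obtain ⟨k, -, hs⟩ := hmem
      rw [Sym2.eq_iff] at hs
      rcases hs with ⟨ha, hb⟩ | ⟨ha, hb⟩ <;> push_cast at ha hb <;>
        rcases hab with h' | h'
      · exact h1 (by linear_combination hb - ha - h')
      · exact h3 (by linear_combination (ha - hb) - h')
      · exact h3 (by linear_combination (hb - ha) - h')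
      · exact h1 (by linear_combination ha - hb - h')
    · -- directed triangle a → i → b → a
      exact hD a (Relation.TransGen.head hai
        (Relation.TransGen.head hib (Relation.TransGen.single hr)))
  rcases h with ⟨hio, hoi⟩ | ⟨hio, hoi⟩
  · exact key (i - 1) (i + 1) (Or.inl (by ring)) hio hoi
  · exact key (i + 1) (i - 1) (Or.inr (by ring)) hio hoi
end

section
/- There is no acyclic orientation of C_n^2 (n ≥ 7) whose set of dependent arcs has exactly ⌈n/2⌉ elements and whose underlying edge set makes C_n^2 triangle-free upon deletion. -/
open SimpleGraph

variable {V : Type*}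

namespace Aux17

variable {n : ℕ}

def sE (q : ZMod n) : Sym2 (ZMod n) := s(q, q+1)
def lE (q : ZMod n) : Sym2 (ZMod n) := s(q, q+2)

lemma nz (hn : 7 ≤ n) {k : ℕ} (h1 : 0 < k) (h2 : k < n) : (k : ZMod n) ≠ 0 := by
  haveI : NeZero n := ⟨by omega⟩
  intro h
  rw [ZMod.natCast_eq_zero_iff] at h
  exact absurd (Nat.le_of_dvd h1 h) (by omega)

lemma nz1 (hn : 7 ≤ n) : (1 : ZMod n) ≠ 0 := by
  have := nz hn (k := 1) one_pos (by omega); simpa using this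

lemma nz2 (hn : 7 ≤ n) : (2 : ZMod n) ≠ 0 := by
  have := nz hn (k := 2) (by norm_num) (by omega); simpa using this

lemma nz3 (hn : 7 ≤ n) : (3 : ZMod n) ≠ 0 := by
  have := nz hn (k := 3) (by norm_num) (by omega); simpa using this

lemma nz4 (hn : 7 ≤ n) : (4 : ZMod n) ≠ 0 := by
  have := nz hn (k := 4) (by norm_num) (by omega); simpa using this

lemma adj_s (hn : 7 ≤ n) (i : ZMod n) : (cycleSq n).Adj i (i+1) :=
  show i ≠ i + 1 ∧ (i - (i+1) = 1 ∨ (i+1) - i = 1 ∨ i - (i+1) = 2 ∨ (i+1) - i = 2) from ⟨fun h => nz1 hn (by linear_combination -h), Or.inr (Or.inl (by ring))⟩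

lemma adj_l (hn : 7 ≤ n) (i : ZMod n) : (cycleSq n).Adj i (i+2) :=
  show i ≠ i + 2 ∧ (i - (i+2) = 1 ∨ (i+2) - i = 1 ∨ i - (i+2) = 2 ∨ (i+2) - i = 2) from ⟨fun h => nz2 hn (by linear_combination -h), Or.inr (Or.inr (Or.inr (by ring)))⟩

lemma exists_height {V : Type*} [Fintype V] {G : SimpleGraph V} (D : GraphOrientation G)
    (hac : D.Acyclic) : ∃ f : V → ℤ, ∀ u v, D.rel u v → f u < f v := by
  classical
  refine ⟨fun v => ((Finset.univ.filter fun u => Relation.TransGen D.rel u v).card : ℤ), ?_⟩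
  intro u v h
  have hss : (Finset.univ.filter fun x => Relation.TransGen D.rel x u) ⊂
      (Finset.univ.filter fun x => Relation.TransGen D.rel x v) := by
    constructor
    · intro x hx
      simp only [Finset.mem_filter, Finset.mem_univ, true_and] at hx ⊢
      exact hx.tail h
    · intro hsub
      have hu : u ∈ Finset.univ.filter fun x => Relation.TransGen D.rel x v := by
        simp only [Finset.mem_filter, Finset.mem_univ, true_and]
        exact Relation.TransGen.single h
      have := hsub hu
      simp only [Finset.mem_filter, Finset.mem_univ, true_and] at this
      exact hac u this
  simpa using (Int.ofNat_lt.mpr (Finset.card_lt_card hss))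

def HNe (n : ℕ) (f : ZMod n → ℤ) : Prop := ∀ u v, (cycleSq n).Adj u v → f u ≠ f v

def HDep (n : ℕ) (S : Set (Sym2 (ZMod n))) (f : ZMod n → ℤ) : Prop :=
  ∀ u v, (cycleSq n).Adj u v → f u < f v →
    Relation.TransGen (fun a b => (cycleSq n).Adj a b ∧ f a < f b ∧ ¬(a = u ∧ b = v)) u v →
    s(u, v) ∈ S

lemma hne_neg {f : ZMod n → ℤ} (h : HNe n f) : HNe n (-f) :=
  fun u v ha hh => h u v ha (neg_injective hh)

lemma hdep_neg {S : Set (Sym2 (ZMod n))} {f : ZMod n → ℤ} (h : HDep n S f) : HDep n S (-f) := by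
  intro u v ha hlt hp
  have hp' : Relation.TransGen
      (fun a b => (cycleSq n).Adj a b ∧ f a < f b ∧ ¬(a = v ∧ b = u)) v u := by
    rw [← Relation.transGen_swap]
    refine Relation.TransGen.mono ?_ _ _ hp
    intro a b hab
    exact ⟨hab.1.symm, neg_lt_neg_iff.mp hab.2.1, fun hh => hab.2.2 ⟨hh.2, hh.1⟩⟩
  have := h v u ha.symm (neg_lt_neg_iff.mp hlt) hp'
  rwa [Sym2.eq_swap] at this

def Btw (m a b : ℤ) : Prop := (a < m ∧ m < b) ∨ (b < m ∧ m < a)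

lemma hdep_path3 {S : Set (Sym2 (ZMod n))} {f : ZMod n → ℤ} (hdep : HDep n S f)
    {x y z : ZMod n} (hxy : (cycleSq n).Adj x y) (hyz : (cycleSq n).Adj y z)
    (hxz : (cycleSq n).Adj x z) (h1 : f x < f y) (h2 : f y < f z) : s(x, z) ∈ S := by
  refine hdep x z hxz (h1.trans h2) ?_
  refine Relation.TransGen.tail (Relation.TransGen.single ⟨hxy, h1, ?_⟩) ⟨hyz, h2, ?_⟩
  · rintro ⟨-, rfl⟩; exact lt_irrefl _ h2
  · rintro ⟨rfl, -⟩; exact lt_irrefl _ h1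

end Aux17

namespace Aux17

variable {n : ℕ} {S : Set (Sym2 (ZMod n))} {f : ZMod n → ℤ}

lemma tri (hn : 7 ≤ n) (hne : HNe n f) (hdep : HDep n S f) (i : ZMod n) :
    (sE i ∈ S ∧ Btw (f (i+2)) (f i) (f (i+1))) ∨
    (sE (i+1) ∈ S ∧ Btw (f i) (f (i+1)) (f (i+2))) ∨
    (lE i ∈ S ∧ Btw (f (i+1)) (f i) (f (i+2))) := by
  have e2 : i + 1 + 1 = i + 2 := by ring
  have hab := adj_s hn i
  have hbc : (cycleSq n).Adj (i+1) (i+2) := by have := adj_s hn (i+1); rwa [e2] at this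
  have hac := adj_l hn i
  have hsE1 : sE (i+1) = s(i+1, i+2) := by rw [sE, e2]
  have n1 := hne _ _ hab
  have n2 := hne _ _ hbc
  have n3 := hne _ _ hac
  rcases lt_or_gt_of_ne n1 with h1 | h1 <;> rcases lt_or_gt_of_ne n2 with h2 | h2 <;>
    rcases lt_or_gt_of_ne n3 with h3 | h3
  · -- a<b, b<c, a<c : l
    exact Or.inr (Or.inr ⟨hdep_path3 hdep hab hbc hac h1 h2, Or.inl ⟨h1, h2⟩⟩)
  · exact absurd (h1.trans h2) (not_lt.mpr h3.le)
  · -- a<b, c<b, a<c : a<c<b : s(a,b) = sE i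
    exact Or.inl ⟨hdep_path3 hdep hac hbc.symm hab h3 h2, Or.inl ⟨h3, h2⟩⟩
  · -- a<b, c<b, c<a : c<a<b : s(c,b) = sE (i+1) swapped
    refine Or.inr (Or.inl ⟨?_, Or.inr ⟨h3, h1⟩⟩)
    have := hdep_path3 hdep hac.symm hab hbc.symm h3 h1
    rwa [hsE1, Sym2.eq_swap]
  · -- b<a, b<c, a<c : b<a<c : s(b,c) = sE (i+1)
    refine Or.inr (Or.inl ⟨?_, Or.inl ⟨h1, h3⟩⟩)
    have := hdep_path3 hdep hab.symm hac hbc h1 h3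
    rwa [hsE1]
  · -- b<a, b<c, c<a : b<c<a : s(b,a) = sE i swapped
    refine Or.inl ⟨?_, Or.inr ⟨h2, h3⟩⟩
    have := hdep_path3 hdep hbc hac.symm hab.symm h2 h3
    rwa [sE, Sym2.eq_swap]
  · exact absurd (h3.trans h2) (not_lt.mpr h1.le)
  · -- b<a, c<b, c<a : c<b<a : l swapped
    refine Or.inr (Or.inr ⟨?_, Or.inr ⟨h2, h1⟩⟩)
    have := hdep_path3 hdep hbc.symm hab.symm hac.symm h2 h1
    rwa [lE, Sym2.eq_swap]

lemma sole_a (hn : 7 ≤ n) (hne : HNe n f) (hdep : HDep n S f) {i : ZMod n}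
    (h2 : sE (i+1) ∉ S) (h3 : lE i ∉ S) : Btw (f (i+2)) (f i) (f (i+1)) := by
  rcases tri hn hne hdep i with ⟨_, h⟩ | ⟨h, _⟩ | ⟨h, _⟩
  exacts [h, absurd h h2, absurd h h3]

lemma sole_b (hn : 7 ≤ n) (hne : HNe n f) (hdep : HDep n S f) {i : ZMod n}
    (h1 : sE i ∉ S) (h3 : lE i ∉ S) : Btw (f i) (f (i+1)) (f (i+2)) := by
  rcases tri hn hne hdep i with ⟨h, _⟩ | ⟨_, h⟩ | ⟨h, _⟩
  exacts [absurd h h1, h, absurd h h3]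

lemma sole_c (hn : 7 ≤ n) (hne : HNe n f) (hdep : HDep n S f) {i : ZMod n}
    (h1 : sE i ∉ S) (h2 : sE (i+1) ∉ S) : Btw (f (i+1)) (f i) (f (i+2)) := by
  rcases tri hn hne hdep i with ⟨h, _⟩ | ⟨h, _⟩ | ⟨_, h⟩
  exacts [absurd h h1, absurd h h2, h]

lemma dbl (hn : 7 ≤ n) (hne : HNe n f) (hdep : HDep n S f) {i : ZMod n}
    (h1 : sE i ∉ S) (h2 : lE i ∉ S) (h3 : sE (i+2) ∉ S) (h4 : lE (i+1) ∉ S) :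
    Btw (f i) (f (i+1)) (f (i+2)) ∧ Btw (f (i+3)) (f (i+1)) (f (i+2)) := by
  refine ⟨sole_b hn hne hdep h1 h2, ?_⟩
  have e2 : i + 1 + 1 = i + 2 := by ring
  have e3 : i + 1 + 2 = i + 3 := by ring
  have := sole_a hn hne hdep (i := i+1) (by rwa [e2]) h4
  rwa [e2, e3] at this

lemma eps_arc {m₁ a b : ℤ} (d1 : Btw m₁ a b) (hε : a < b) : a < m₁ ∧ m₁ < b := by
  rcases d1 with h | h
  · exact h
  · exact absurd hε (by rcases h with ⟨h1, h2⟩; exact not_lt.mpr (h1.trans h2).le)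

lemma eps_step {x1 x2 x3 x4 : ℤ} (d1 : Btw x3 x1 x2) (d2 : Btw x2 x3 x4) (hε : x1 < x2) :
    x3 < x4 := by
  rcases d1 with ⟨a1, a2⟩ | ⟨a1, a2⟩ <;> rcases d2 with ⟨b1, b2⟩ | ⟨b1, b2⟩ <;> linarith

end Aux17

namespace Aux17

variable {n : ℕ} {S : Set (Sym2 (ZMod n))} {f : ZMod n → ℤ}

lemma caseE (hn : 7 ≤ n) (hev : n % 2 = 0) (hne : HNe n f) (hdep : HDep n S f)
    (hstep : ∀ i : ZMod n, sE (i+1) ∈ S →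
      sE i ∉ S ∧ lE i ∉ S ∧ sE (i+2) ∉ S ∧ lE (i+1) ∉ S ∧ sE (i+3) ∈ S)
    (i0 : ZMod n) (hmem : sE (i0+1) ∈ S) (hanc : f (i0+1) < f (i0+2)) : False := by
  have key : ∀ k : ℕ, sE (i0 + 2*(k:ZMod n) + 1) ∈ S ∧
      f (i0 + 2*(k:ZMod n) + 1) < f (i0 + 2*(k:ZMod n) + 2) := by
    intro k
    induction k with
    | zero =>
      simp only [Nat.cast_zero, mul_zero, add_zero]
      exact ⟨hmem, hanc⟩
    | succ k ih =>
      obtain ⟨hm, hε⟩ := ih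
      obtain ⟨a1, a2, a3, a4, a5⟩ := hstep (i0 + 2*(k:ZMod n)) hm
      have hd := dbl hn hne hdep a1 a2 a3 a4
      have e1 : i0 + 2*(k:ZMod n) + 2 + 1 = i0 + 2*(k:ZMod n) + 3 := by ring
      obtain ⟨b1, b2, b3, b4, b5⟩ := hstep (i0 + 2*(k:ZMod n) + 2) (by rwa [← e1] at a5)
      have hd2 := dbl hn hne hdep b1 b2 b3 b4
      have e2 : i0 + 2*(k:ZMod n) + 2 + 2 = i0 + 2*(k:ZMod n) + 4 := by ring
      have hε' : f (i0 + 2*(k:ZMod n) + 3) < f (i0 + 2*(k:ZMod n) + 4) := by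
        have h1 := hd2.1
        rw [e1, e2] at h1
        exact eps_step hd.2 h1 hε
      have e3 : i0 + 2*((k+1:ℕ):ZMod n) + 1 = i0 + 2*(k:ZMod n) + 3 := by push_cast; ring
      have e4 : i0 + 2*((k+1:ℕ):ZMod n) + 2 = i0 + 2*(k:ZMod n) + 4 := by push_cast; ring
      rw [e3, e4]
      exact ⟨a5, hε'⟩
  have mono : ∀ k : ℕ, f (i0 + 2*(k:ZMod n) + 1) < f (i0 + 2*((k+1:ℕ):ZMod n) + 1) := by
    intro k
    obtain ⟨hm, hε⟩ := key k
    obtain ⟨a1, a2, a3, a4, a5⟩ := hstep (i0 + 2*(k:ZMod n)) hm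
    have hd := dbl hn hne hdep a1 a2 a3 a4
    have e3 : i0 + 2*((k+1:ℕ):ZMod n) + 1 = i0 + 2*(k:ZMod n) + 3 := by push_cast; ring
    rw [e3]
    exact (eps_arc hd.2 hε).1
  have smono : StrictMono (fun k : ℕ => f (i0 + 2*(k:ZMod n) + 1)) :=
    strictMono_nat_of_lt_succ fun k => by exact_mod_cast mono k
  have hwrap : (2:ZMod n) * ((n/2 : ℕ) : ZMod n) = 0 := by
    have h2 : (2 * (n / 2) : ℕ) = n := by omega
    calc (2:ZMod n) * ((n/2:ℕ):ZMod n) = ((2 * (n/2) : ℕ) : ZMod n) := by push_cast; ring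
    _ = ((n:ℕ) : ZMod n) := by rw [h2]
    _ = 0 := ZMod.natCast_self n
  have heq : f (i0 + 2*(((n/2:ℕ)):ZMod n) + 1) = f (i0 + 2*((0:ℕ):ZMod n) + 1) := by
    rw [hwrap]
    norm_num
  exact absurd heq (ne_of_gt (smono (show (0:ℕ) < n/2 by omega)))

end Aux17

namespace Aux17

variable {n : ℕ} {S : Set (Sym2 (ZMod n))} {f : ZMod n → ℤ}

lemma caseO1 (hn : 7 ≤ n) {M : ℕ} (hM : n = 2*M+3)
    (hne : HNe n f) (hdep : HDep n S f)
    (hcov : ∀ i : ZMod n, sE i ∈ S ∨ sE (i+1) ∈ S ∨ lE i ∈ S)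
    (hB : ∀ x : ZMod n, lE x ∉ S)
    (p : ZMod n) (hp1 : sE (p+1) ∈ S)
    (hdef : ∀ i : ZMod n, sE i ∈ S → sE (i+1) ∈ S → i = p)
    (hanc : f (p+3) < f (p+4)) : False := by
  have hM2 : 2 ≤ M := by omega
  have hzz : ∀ (a : ℕ), 0 < a → a < n → ((a:ℕ):ZMod n) ≠ 0 := fun a => nz hn
  have zc3 : (2*(M:ZMod n) + 3) = 0 := by
    have h0 : ((2*M+3 : ℕ) : ZMod n) = 0 := by rw [← hM]; exact ZMod.natCast_self n
    push_cast at h0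
    linear_combination h0
  -- p+2 not in A
  have hp2 : sE (p+2) ∉ S := by
    intro hmem
    have := hdef (p+1) hp1 (by rwa [show p+1+1 = p+2 by ring])
    exact hzz 1 (by omega) (by omega) (by push_cast; linear_combination this)
  -- membership chain
  have Qmem : ∀ k : ℕ, 1 ≤ k → k ≤ M → sE (p + 2*(k:ZMod n) + 1) ∈ S := by
    intro k
    induction k with
    | zero => omega
    | succ k ih =>
      intro _ hk1
      rcases Nat.eq_zero_or_pos k with rfl | hkpos
      · -- base : k+1 = 1, show sE (p+3) ∈ S
        have e1 : p + 2*((1:ℕ):ZMod n) + 1 = p + 3 := by push_cast; ring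
        rw [e1]
        rcases hcov (p+2) with h | h | h
        · exact absurd h hp2
        · rwa [show p+2+1 = p+3 by ring] at h
        · exact absurd h (hB _)
      · have hq := ih hkpos (by omega)
        rcases hcov (p + 2*(k:ZMod n) + 2) with h | h | h
        · -- adjacent shorts at p+2k+1 : defect
          exfalso
          have e1 : p + 2*(k:ZMod n) + 1 + 1 = p + 2*(k:ZMod n) + 2 := by ring
          have := hdef _ hq (by rwa [e1])
          exact hzz (2*k+1) (by omega) (by omega) (by push_cast; linear_combination this)
        · have e2 : p + 2*(k:ZMod n) + 2 + 1 = p + 2*((k+1:ℕ):ZMod n) + 1 := by push_cast; ring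
          rwa [e2] at h
        · exact absurd h (hB _)
  -- gadget facts
  have gad : ∀ k : ℕ, 1 ≤ k → k ≤ M →
      sE (p + 2*(k:ZMod n)) ∉ S ∧ lE (p + 2*(k:ZMod n)) ∉ S ∧
      sE (p + 2*(k:ZMod n) + 2) ∉ S ∧ lE (p + 2*(k:ZMod n) + 1) ∉ S := by
    intro k hk1 hkM
    have hq := Qmem k hk1 hkM
    refine ⟨?_, hB _, ?_, hB _⟩
    · intro hmem
      have e1 : p + 2*(k:ZMod n) + 1 = p + 2*(k:ZMod n) + 1 := rfl
      have := hdef _ hmem (by rwa [show p + 2*(k:ZMod n) + 1 = p + 2*(k:ZMod n) + 1 from rfl] at hq)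
      exact hzz (2*k) (by omega) (by omega) (by push_cast; linear_combination this)
    · intro hmem
      have e1 : p + 2*(k:ZMod n) + 1 + 1 = p + 2*(k:ZMod n) + 2 := by ring
      have := hdef _ hq (by rwa [e1])
      exact hzz (2*k+1) (by omega) (by omega) (by push_cast; linear_combination this)
  -- epsilon chain
  have Qeps : ∀ k : ℕ, 1 ≤ k → k ≤ M →
      f (p + 2*(k:ZMod n) + 1) < f (p + 2*(k:ZMod n) + 2) := by
    intro k
    induction k with
    | zero => omega
    | succ k ih =>
      intro _ hk1
      rcases Nat.eq_zero_or_pos k with rfl | hkpos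
      · have e1 : p + 2*((1:ℕ):ZMod n) + 1 = p + 3 := by push_cast; ring
        have e2 : p + 2*((1:ℕ):ZMod n) + 2 = p + 4 := by push_cast; ring
        rw [e1, e2]; exact hanc
      · have hε := ih hkpos (by omega)
        obtain ⟨a1, a2, a3, a4⟩ := gad k hkpos (by omega)
        have hd := dbl hn hne hdep a1 a2 a3 a4
        obtain ⟨b1, b2, b3, b4⟩ := gad (k+1) (by omega) hk1
        have es : p + 2*((k+1:ℕ):ZMod n) = p + 2*(k:ZMod n) + 2 := by push_cast; ring
        rw [es] at b1 b2 b3 b4 ⊢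
        have hd2 := dbl hn hne hdep b1 b2 b3 b4
        have e1 : p + 2*(k:ZMod n) + 2 + 1 = p + 2*(k:ZMod n) + 3 := by ring
        have e2 : p + 2*(k:ZMod n) + 2 + 2 = p + 2*(k:ZMod n) + 4 := by ring
        rw [e1, e2] at hd2
        rw [e1, e2]
        exact eps_step hd.2 hd2.1 hε
  -- endgame
  -- double at k = 1 : f(p+3) < f(p+2)
  obtain ⟨a1, a2, a3, a4⟩ := gad 1 le_rfl (by omega)
  have e11 : p + 2*((1:ℕ):ZMod n) = p + 2 := by push_cast; ring
  rw [e11] at a1 a2 a3 a4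
  have hd1 := dbl hn hne hdep a1 a2 a3 a4
  rw [show p+2+1 = p+3 by ring, show p+2+2 = p+4 by ring, show p+2+3 = p+5 by ring] at hd1
  have h32 : f (p+3) < f (p+2) := (eps_arc hd1.1 hanc).1
  -- sole_a at p+1 : f(p+1) < f(p+2)
  have hsa := sole_a hn hne hdep (i := p+1) (by rwa [show p+1+1 = p+2 by ring]) (hB _)
  rw [show p+1+2 = p+3 by ring, show p+1+1 = p+2 by ring] at hsa
  have h12 : f (p+1) < f (p+2) := by
    rcases hsa with ⟨x1, x2⟩ | ⟨x1, x2⟩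
    · exact x1.trans x2
    · linarith
  -- double at k = M
  have hεM := Qeps M (by omega) le_rfl
  obtain ⟨c1, c2, c3, c4⟩ := gad M (by omega) le_rfl
  have hdM := dbl hn hne hdep c1 c2 c3 c4
  have ec0 : p + 2*(M:ZMod n) + 3 = p := by linear_combination zc3
  have ec1 : p + 2*(M:ZMod n) + 4 = p + 1 := by linear_combination zc3
  have hdM2 := hdM.2
  rw [ec0] at hdM2
  have hpM : f p < f (p + 2*(M:ZMod n) + 2) := (eps_arc hdM2 hεM).2
  -- sole_b at i = p + 2M + 2
  have hsb := sole_b hn hne hdep (i := p + 2*(M:ZMod n) + 2) c3 (hB _)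
  rw [show p + 2*(M:ZMod n) + 2 + 1 = p + 2*(M:ZMod n) + 3 by ring,
      show p + 2*(M:ZMod n) + 2 + 2 = p + 2*(M:ZMod n) + 4 by ring, ec0, ec1] at hsb
  have h01 : f p < f (p+1) := by
    rcases hsb with ⟨x1, x2⟩ | ⟨x1, x2⟩
    · exact x1.trans x2
    · linarith
  -- final contradiction : lE p ∈ S
  have hadj12 : (cycleSq n).Adj (p+1) (p+2) := by
    have := adj_s hn (p+1); rwa [show p+1+1 = p+2 by ring] at this
  exact hB p (hdep_path3 hdep (adj_s hn p) hadj12 (adj_l hn p) h01 h12)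

end Aux17

namespace Aux17

variable {n : ℕ} {S : Set (Sym2 (ZMod n))} {f : ZMod n → ℤ}

lemma caseO2 (hn : 7 ≤ n) {M : ℕ} (hM : n = 2*M+3)
    (hne : HNe n f) (hdep : HDep n S f)
    (h4 : ∀ i : ZMod n, sE (i+1) ∈ S →
      sE i ∉ S ∧ lE i ∉ S ∧ sE (i+2) ∉ S ∧ lE (i+1) ∉ S)
    (hnext : ∀ i : ZMod n, sE (i+1) ∈ S → (sE (i+3) ∈ S ∨ lE (i+2) ∈ S))
    (j : ZMod n) (hBuniq : ∀ x : ZMod n, lE x ∈ S → x = j)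
    (hj1 : sE (j+1) ∉ S) (hj2 : sE (j+2) ∈ S)
    (hanc : f (j+2) < f (j+3)) : False := by
  have hzz : ∀ (a : ℕ), 0 < a → a < n → ((a:ℕ):ZMod n) ≠ 0 := fun a => nz hn
  have zc3 : (2*(M:ZMod n) + 3) = 0 := by
    have h0 : ((2*M+3 : ℕ) : ZMod n) = 0 := by rw [← hM]; exact ZMod.natCast_self n
    push_cast at h0
    linear_combination h0
  -- chain : for k ≤ M, sE (j + 2k + 2) ∈ S and ε
  have key : ∀ k : ℕ, k ≤ M → sE (j + 2*(k:ZMod n) + 2) ∈ S ∧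
      f (j + 2*(k:ZMod n) + 2) < f (j + 2*(k:ZMod n) + 3) := by
    intro k
    induction k with
    | zero =>
      intro _
      simp only [Nat.cast_zero, mul_zero, add_zero]
      exact ⟨hj2, hanc⟩
    | succ k ih =>
      intro hk1
      obtain ⟨hm, hε⟩ := ih (by omega)
      -- gadget at i = j + 2k + 1
      have em : j + 2*(k:ZMod n) + 1 + 1 = j + 2*(k:ZMod n) + 2 := by ring
      obtain ⟨a1, a2, a3, a4⟩ := h4 (j + 2*(k:ZMod n) + 1) (by rwa [em])
      rw [em] at a4
      rw [show j + 2*(k:ZMod n) + 1 + 2 = j + 2*(k:ZMod n) + 3 by ring] at a3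
      -- next membership
      have hnx := hnext (j + 2*(k:ZMod n) + 1) (by rwa [em])
      rw [show j + 2*(k:ZMod n) + 1 + 3 = j + 2*(k:ZMod n) + 4 by ring,
          show j + 2*(k:ZMod n) + 1 + 2 = j + 2*(k:ZMod n) + 3 by ring] at hnx
      have hm4 : sE (j + 2*(k:ZMod n) + 4) ∈ S := by
        rcases hnx with h | h
        · exact h
        · exfalso
          have := hBuniq _ h
          have : ((2*k+3 : ℕ) : ZMod n) = 0 := by push_cast; linear_combination this
          exact hzz (2*k+3) (by omega) (by omega) this
      -- dbl at i and at i+2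
      have hd := dbl hn hne hdep (i := j + 2*(k:ZMod n) + 1) a1 a2
        (by rwa [show j + 2*(k:ZMod n) + 1 + 2 = j + 2*(k:ZMod n) + 3 by ring]) (by rwa [em])
      obtain ⟨b1, b2, b3, b4⟩ := h4 (j + 2*(k:ZMod n) + 3)
        (by rwa [show j + 2*(k:ZMod n) + 3 + 1 = j + 2*(k:ZMod n) + 4 by ring])
      have hd2 := dbl hn hne hdep (i := j + 2*(k:ZMod n) + 3) b1 b2 b3 b4
      rw [show j + 2*(k:ZMod n) + 1 + 1 = j + 2*(k:ZMod n) + 2 by ring,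
          show j + 2*(k:ZMod n) + 1 + 2 = j + 2*(k:ZMod n) + 3 by ring,
          show j + 2*(k:ZMod n) + 1 + 3 = j + 2*(k:ZMod n) + 4 by ring] at hd
      rw [show j + 2*(k:ZMod n) + 3 + 1 = j + 2*(k:ZMod n) + 4 by ring,
          show j + 2*(k:ZMod n) + 3 + 2 = j + 2*(k:ZMod n) + 5 by ring] at hd2
      have hε' : f (j + 2*(k:ZMod n) + 4) < f (j + 2*(k:ZMod n) + 5) :=
        eps_step hd.2 hd2.1 hε
      have e3 : j + 2*((k+1:ℕ):ZMod n) + 2 = j + 2*(k:ZMod n) + 4 := by push_cast; ring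
      have e4 : j + 2*((k+1:ℕ):ZMod n) + 3 = j + 2*(k:ZMod n) + 5 := by push_cast; ring
      rw [e3, e4]
      exact ⟨hm4, hε'⟩
  -- arc lemma : for k+1 ≤ M, f (j+2k+2) < f (j+2k+4)
  have arc : ∀ k : ℕ, k ≤ M → f (j + 2*(k:ZMod n) + 2) < f (j + 2*(k:ZMod n) + 4) := by
    intro k hk
    obtain ⟨hm, hε⟩ := key k hk
    have em : j + 2*(k:ZMod n) + 1 + 1 = j + 2*(k:ZMod n) + 2 := by ring
    obtain ⟨a1, a2, a3, a4⟩ := h4 (j + 2*(k:ZMod n) + 1) (by rwa [em])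
    have hd := dbl hn hne hdep (i := j + 2*(k:ZMod n) + 1) a1 a2 a3 a4
    rw [show j + 2*(k:ZMod n) + 1 + 1 = j + 2*(k:ZMod n) + 2 by ring,
        show j + 2*(k:ZMod n) + 1 + 2 = j + 2*(k:ZMod n) + 3 by ring,
        show j + 2*(k:ZMod n) + 1 + 3 = j + 2*(k:ZMod n) + 4 by ring] at hd
    exact (eps_arc hd.2 hε).1
  -- the restricted relation
  set R' : ZMod n → ZMod n → Prop := fun a b =>
    (cycleSq n).Adj a b ∧ f a < f b ∧ ¬(a = j+2 ∧ b = j+1) with hR'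
  -- adjacency of step-2
  have adj2 : ∀ x : ZMod n, (cycleSq n).Adj x (x+2) := adj_l hn
  -- path
  have path : ∀ k : ℕ, 1 ≤ k → k ≤ M → Relation.TransGen R' (j+2) (j + 2*(k:ZMod n) + 2) := by
    intro k
    induction k with
    | zero => omega
    | succ k ih =>
      intro _ hk1
      have harc := arc k (by omega)
      have hstep : R' (j + 2*(k:ZMod n) + 2) (j + 2*((k+1:ℕ):ZMod n) + 2) := by
        have e3 : j + 2*((k+1:ℕ):ZMod n) + 2 = j + 2*(k:ZMod n) + 4 := by push_cast; ring
        rw [e3]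
        refine ⟨?_, harc, ?_⟩
        · have := adj2 (j + 2*(k:ZMod n) + 2)
          rwa [show j + 2*(k:ZMod n) + 2 + 2 = j + 2*(k:ZMod n) + 4 by ring] at this
        · rintro ⟨-, h2⟩
          have : ((2*k+3 : ℕ) : ZMod n) = 0 := by push_cast; linear_combination h2
          exact hzz (2*k+3) (by omega) (by omega) this
      rcases Nat.eq_zero_or_pos k with rfl | hkpos
      · refine Relation.TransGen.single ?_
        simpa using hstep
      · exact Relation.TransGen.tail (ih hkpos (by omega)) hstep
  -- extend path to j+1
  have lastarc : R' (j + 2*(M:ZMod n) + 2) (j+1) := by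
    obtain ⟨hm, hε⟩ := key M le_rfl
    have em : j + 2*(M:ZMod n) + 1 + 1 = j + 2*(M:ZMod n) + 2 := by ring
    obtain ⟨a1, a2, a3, a4⟩ := h4 (j + 2*(M:ZMod n) + 1) (by rwa [em])
    have hd := dbl hn hne hdep (i := j + 2*(M:ZMod n) + 1) a1 a2 a3 a4
    rw [show j + 2*(M:ZMod n) + 1 + 1 = j + 2*(M:ZMod n) + 2 by ring,
        show j + 2*(M:ZMod n) + 1 + 2 = j + 2*(M:ZMod n) + 3 by ring,
        show j + 2*(M:ZMod n) + 1 + 3 = j + 2*(M:ZMod n) + 4 by ring] at hd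
    have e1 : j + 2*(M:ZMod n) + 4 = j + 1 := by linear_combination zc3
    have hlt : f (j + 2*(M:ZMod n) + 2) < f (j+1) := by
      have := (eps_arc hd.2 hε).1
      rwa [e1] at this
    refine ⟨?_, hlt, ?_⟩
    · have := adj2 (j + 2*(M:ZMod n) + 2)
      rwa [show j + 2*(M:ZMod n) + 2 + 2 = j + 2*(M:ZMod n) + 4 by ring, e1] at this
    · rintro ⟨h1, -⟩
      have : ((2*M : ℕ) : ZMod n) = 0 := by push_cast; linear_combination h1
      exact hzz (2*M) (by omega) (by omega) this
  have fullpath : Relation.TransGen R' (j+2) (j+1) :=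
    Relation.TransGen.tail (path M (by omega) le_rfl) lastarc
  -- f (j+2) < f (j+1)
  have hlt21 : f (j+2) < f (j+1) := by
    obtain ⟨a1, a2, a3, a4⟩ := h4 (j+1) (by rwa [show j+1+1 = j+2 by ring])
    have hd := dbl hn hne hdep (i := j+1) a1 a2 a3 a4
    rw [show j+1+1 = j+2 by ring, show j+1+2 = j+3 by ring] at hd
    rcases hd.1 with ⟨x1, x2⟩ | ⟨x1, x2⟩
    · exact x1
    · linarith
  -- dependent arc
  have hadj : (cycleSq n).Adj (j+2) (j+1) := by
    have := adj_s hn (j+1)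
    rw [show j+1+1 = j+2 by ring] at this
    exact this.symm
  have := hdep (j+2) (j+1) hadj hlt21 fullpath
  rw [Sym2.eq_swap] at this
  refine hj1 ?_
  rw [sE, show j+1+1 = j+2 by ring]
  exact this

end Aux17


/-- For `n ≥ 7`, there is no acyclic orientation of `C_n^2` with exactly `⌈n/2⌉`
dependent arcs whose underlying edges, when deleted, leave `C_n^2` triangle-free. -/
theorem stmt17 (n : ℕ) (hn : 7 ≤ n) :
    ¬ ∃ D : GraphOrientation (cycleSq n), D.Acyclic ∧
      D.depArcs.ncard = (n + 1) / 2 ∧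
      ((cycleSq n).deleteEdges
        {e : Sym2 (ZMod n) | ∃ u v, D.Dep u v ∧ e = s(u, v)}).CliqueFree 3 := by
  rintro ⟨D, hac, hcard, hdel⟩
  haveI : NeZero n := ⟨by omega⟩
  classical
  set S : Set (Sym2 (ZMod n)) := {e | ∃ u v, D.Dep u v ∧ e = s(u, v)} with hSdef
  -- covering
  have hcov : ∀ i : ZMod n, Aux17.sE i ∈ S ∨ Aux17.sE (i+1) ∈ S ∨ Aux17.lE i ∈ S := by
    intro i
    by_contra hcon
    push_neg at hcon
    obtain ⟨h1, h2, h3⟩ := hcon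
    have e2 : i + 1 + 1 = i + 2 := by ring
    refine hdel {i, i+1, i+2} (SimpleGraph.is3Clique_triple_iff.mpr ⟨?_, ?_, ?_⟩)
    · exact SimpleGraph.deleteEdges_adj.mpr ⟨Aux17.adj_s hn i, h1⟩
    · exact SimpleGraph.deleteEdges_adj.mpr ⟨Aux17.adj_l hn i, h3⟩
    · refine SimpleGraph.deleteEdges_adj.mpr ⟨?_, ?_⟩
      · have := Aux17.adj_s hn (i+1); rwa [e2] at this
      · have he : Aux17.sE (i+1) = s(i+1, i+2) := by rw [Aux17.sE, e2]
        rw [← he]; exact h2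
  -- heights
  obtain ⟨f0, hf0⟩ := Aux17.exists_height D hac
  have hdir : ∀ u v : ZMod n, (cycleSq n).Adj u v → f0 u < f0 v → D.rel u v := by
    intro u v ha hlt
    rcases D.cover ha with h | h
    · exact h
    · exact absurd (hf0 _ _ h) (not_lt.mpr hlt.le)
  have hne : Aux17.HNe n f0 := by
    intro u v ha
    rcases D.cover ha with h | h
    · exact (hf0 _ _ h).ne
    · exact (hf0 _ _ h).ne'
  have hdep : Aux17.HDep n S f0 := by
    intro u v ha hlt hp
    refine ⟨u, v, ⟨hdir u v ha hlt, ?_⟩, rfl⟩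
    refine Relation.TransGen.mono ?_ _ _ hp
    intro a b hab
    exact ⟨hdir a b hab.1 hab.2.1, hab.2.2⟩
  -- counting sets
  set As : Finset (ZMod n) := Finset.univ.filter (fun q => Aux17.sE q ∈ S) with hAs
  set Bs : Finset (ZMod n) := Finset.univ.filter (fun q => Aux17.lE q ∈ S) with hBs
  have hAmem : ∀ q : ZMod n, q ∈ As ↔ Aux17.sE q ∈ S := by intro q; simp [hAs]
  have hBmem : ∀ q : ZMod n, q ∈ Bs ↔ Aux17.lE q ∈ S := by intro q; simp [hBs]
  have sE_inj : Function.Injective (Aux17.sE : ZMod n → Sym2 (ZMod n)) := by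
    intro a b h
    rw [Aux17.sE, Aux17.sE, Sym2.eq_iff] at h
    rcases h with ⟨h1, h2⟩ | ⟨h1, h2⟩
    · exact h1
    · exact absurd (show (2:ZMod n) = 0 by linear_combination h2 - h1) (Aux17.nz2 hn)
  have lE_inj : Function.Injective (Aux17.lE : ZMod n → Sym2 (ZMod n)) := by
    intro a b h
    rw [Aux17.lE, Aux17.lE, Sym2.eq_iff] at h
    rcases h with ⟨h1, h2⟩ | ⟨h1, h2⟩
    · exact h1
    · exact absurd (show (4:ZMod n) = 0 by linear_combination h2 - h1) (Aux17.nz4 hn)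
  have hdisj : Disjoint (As.image Aux17.sE) (Bs.image Aux17.lE) := by
    rw [Finset.disjoint_left]
    rintro e he1 he2
    obtain ⟨a, -, rfl⟩ := Finset.mem_image.mp he1
    obtain ⟨b, -, hba⟩ := Finset.mem_image.mp he2
    rw [Aux17.lE, Aux17.sE, Sym2.eq_iff] at hba
    rcases hba with ⟨h1, h2⟩ | ⟨h1, h2⟩
    · exact absurd (show (1:ZMod n) = 0 by linear_combination h2 - h1) (Aux17.nz1 hn)
    · exact absurd (show (3:ZMod n) = 0 by linear_combination h2 - h1) (Aux17.nz3 hn)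
  have hSfin : S.Finite := Set.toFinite S
  have hsub : (As.image Aux17.sE) ∪ (Bs.image Aux17.lE) ⊆ hSfin.toFinset := by
    intro e he
    rcases Finset.mem_union.mp he with h | h
    · obtain ⟨a, ha, rfl⟩ := Finset.mem_image.mp h
      exact hSfin.mem_toFinset.mpr ((hAmem a).mp ha)
    · obtain ⟨a, ha, rfl⟩ := Finset.mem_image.mp h
      exact hSfin.mem_toFinset.mpr ((hBmem a).mp ha)
  have hSim : S = (fun p : ZMod n × ZMod n => s(p.1, p.2)) '' D.depArcs := by
    ext e
    simp only [hSdef, Set.mem_setOf_eq, Set.mem_image, GraphOrientation.depArcs, Prod.exists]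
    constructor
    · rintro ⟨u, v, hd, rfl⟩; exact ⟨u, v, hd, rfl⟩
    · rintro ⟨u, v, hd, rfl⟩; exact ⟨u, v, hd, rfl⟩
  have hcount : 2 * (As.card + Bs.card) ≤ n + 1 := by
    have h1 : (As.image Aux17.sE ∪ Bs.image Aux17.lE).card = As.card + Bs.card := by
      rw [Finset.card_union_of_disjoint hdisj, Finset.card_image_of_injective _ sE_inj,
        Finset.card_image_of_injective _ lE_inj]
    have h2 : As.card + Bs.card ≤ S.ncard := by
      rw [← h1, Set.ncard_eq_toFinset_card _ hSfin]
      exact Finset.card_le_card hsub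
    have h3 : S.ncard ≤ (n+1)/2 := by
      rw [hSim]
      calc ((fun p : ZMod n × ZMod n => s(p.1, p.2)) '' D.depArcs).ncard
          ≤ D.depArcs.ncard := Set.ncard_image_le (Set.toFinite _)
        _ = (n+1)/2 := hcard
    omega
  -- the covering multiplicity function
  set c : ZMod n → ℕ := fun i => (if Aux17.sE i ∈ S then 1 else 0) +
    (if Aux17.sE (i+1) ∈ S then 1 else 0) + (if Aux17.lE i ∈ S then 1 else 0) with hc
  have hc1 : ∀ i, 1 ≤ c i := by
    intro i
    have h := hcov i
    simp only [hc]
    split_ifs with h1 h2 h3 <;> first | omega | tauto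
  have hcardZ : Fintype.card (ZMod n) = n := ZMod.card n
  have hsumc : ∑ i : ZMod n, c i = 2 * As.card + Bs.card := by
    have e1 : ∑ i : ZMod n, (if Aux17.sE i ∈ S then 1 else 0) = As.card := by
      rw [hAs, Finset.card_filter]
    have e3 : ∑ i : ZMod n, (if Aux17.lE i ∈ S then 1 else 0) = Bs.card := by
      rw [hBs, Finset.card_filter]
    have e2 : ∑ i : ZMod n, (if Aux17.sE (i+1) ∈ S then 1 else 0) = As.card := by
      rw [← e1]
      exact Fintype.sum_equiv (Equiv.addRight (1:ZMod n)) _ _ (fun i => by simp; exact if_congr Iff.rfl rfl rfl)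
    calc ∑ i : ZMod n, c i
        = (∑ i : ZMod n, (if Aux17.sE i ∈ S then 1 else 0)) +
          (∑ i : ZMod n, (if Aux17.sE (i+1) ∈ S then 1 else 0)) +
          (∑ i : ZMod n, (if Aux17.lE i ∈ S then 1 else 0)) := by
          simp only [hc]
          rw [← Finset.sum_add_distrib, ← Finset.sum_add_distrib]
      _ = 2 * As.card + Bs.card := by rw [e1, e2, e3]; ring
  have hlow : n ≤ ∑ i : ZMod n, c i := by
    calc n = ∑ _i : ZMod n, 1 := by rw [Finset.sum_const, Finset.card_univ, hcardZ]; simp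
    _ ≤ ∑ i, c i := Finset.sum_le_sum (fun i _ => hc1 i)
  have hpair : ∀ t : Finset (ZMod n), (∀ x ∈ t, 2 ≤ c x) → n + t.card ≤ ∑ i : ZMod n, c i := by
    intro t ht
    have hle : ∑ i : ZMod n, (1 + if i ∈ t then 1 else 0) ≤ ∑ i : ZMod n, c i := by
      refine Finset.sum_le_sum fun i _ => ?_
      by_cases h : i ∈ t
      · simp only [h, if_true]; exact ht i h
      · simp only [h, if_false]; simpa using hc1 i
    calc n + t.card = ∑ i : ZMod n, (1 + if i ∈ t then 1 else 0) := by
          rw [Finset.sum_add_distrib]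
          congr 1
          · rw [Finset.sum_const, Finset.card_univ, hcardZ]; simp
          · rw [Finset.sum_ite_mem, Finset.univ_inter, Finset.sum_const, smul_eq_mul, mul_one]
      _ ≤ ∑ i : ZMod n, c i := hle
  have hBle1 : Bs.card ≤ 1 := by omega
  -- helper : all multiplicities 1 when the total is n
  have hall_of : (∑ i : ZMod n, c i = n) → ∀ i, c i = 1 := by
    intro hs i
    by_contra hne2
    have h2 : 2 ≤ c i := by have := hc1 i; omega
    have := hpair {i} (by simpa using h2)
    simp only [Finset.card_singleton] at this
    omega
  rcases Nat.lt_or_ge Bs.card 1 with hB0 | hB1'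
  · -- Bs empty
    have hBe : Bs = ∅ := Finset.card_eq_zero.mp (by omega)
    have hB : ∀ x : ZMod n, Aux17.lE x ∉ S := by
      intro x hx
      have : x ∈ Bs := (hBmem x).mpr hx
      simp [hBe] at this
    have hBc0 : Bs.card = 0 := by omega
    rcases Nat.even_or_odd n with hev | hodd
    · -- even case
      have hev2 : n % 2 = 0 := Nat.even_iff.mp hev
      have hsum_eq : ∑ i : ZMod n, c i = n := by omega
      have hall := hall_of hsum_eq
      have hstep : ∀ i : ZMod n, Aux17.sE (i+1) ∈ S →
          Aux17.sE i ∉ S ∧ Aux17.lE i ∉ S ∧ Aux17.sE (i+2) ∉ S ∧ Aux17.lE (i+1) ∉ S ∧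
          Aux17.sE (i+3) ∈ S := by
        intro i hi
        have hci := hall i
        have hci1 := hall (i+1)
        simp only [hc] at hci hci1
        rw [if_pos hi] at hci
        rw [if_pos hi, show i+1+1 = i+2 by ring] at hci1
        have hsi : Aux17.sE i ∉ S := by
          intro hmem; rw [if_pos hmem] at hci; omega
        have hli : Aux17.lE i ∉ S := hB i
        have hsi2 : Aux17.sE (i+2) ∉ S := by
          intro hmem; rw [if_pos hmem] at hci1; omega
        have hli1 : Aux17.lE (i+1) ∉ S := hB (i+1)
        refine ⟨hsi, hli, hsi2, hli1, ?_⟩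
        rcases hcov (i+2) with h | h | h
        · exact absurd h hsi2
        · rwa [show i+2+1 = i+3 by ring] at h
        · exact absurd h (hB _)
      -- anchor
      have hanch : ∃ i0 : ZMod n, Aux17.sE (i0+1) ∈ S := by
        rcases hcov 0 with h | h | h
        · exact ⟨-1, by rwa [show (-1 : ZMod n) + 1 = 0 by ring]⟩
        · exact ⟨0, h⟩
        · exact absurd h (hB _)
      obtain ⟨i0, hmem0⟩ := hanch
      have hadj12 : (cycleSq n).Adj (i0+1) (i0+2) := by
        have := Aux17.adj_s hn (i0+1); rwa [show i0+1+1 = i0+2 by ring] at this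
      rcases lt_or_gt_of_ne (hne _ _ hadj12) with ha | ha
      · exact Aux17.caseE hn hev2 hne hdep hstep i0 hmem0 ha
      · exact Aux17.caseE hn hev2 (Aux17.hne_neg hne) (Aux17.hdep_neg hdep) hstep i0 hmem0
          (by simpa using neg_lt_neg ha)
    · -- odd, no long edges : one defect
      have ho2 : n % 2 = 1 := Nat.odd_iff.mp hodd
      obtain ⟨M, hM⟩ : ∃ M, n = 2*M+3 := ⟨(n-3)/2, by omega⟩
      have hsum_eq : ∑ i : ZMod n, c i = n + 1 := by omega
      have hdefect : ∃ p : ZMod n, 2 ≤ c p := by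
        by_contra hcon
        push_neg at hcon
        have : ∑ i : ZMod n, c i ≤ n := by
          calc ∑ i : ZMod n, c i ≤ ∑ _i : ZMod n, 1 :=
            Finset.sum_le_sum fun i _ => by have := hcon i; omega
          _ = n := by rw [Finset.sum_const, Finset.card_univ, hcardZ]; simp
        omega
      obtain ⟨p, hp2⟩ := hdefect
      have huniq : ∀ i, 2 ≤ c i → i = p := by
        intro i hi
        by_contra hne'
        have hpp := hpair {i, p} (by
          intro x hx
          rcases Finset.mem_insert.mp hx with rfl | hx
          · exact hi
          · have : x = p := by simpa using hx
            subst this; exact hp2)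
        rw [Finset.card_insert_of_notMem (by simpa using hne'), Finset.card_singleton] at hpp
        omega
      have hps : Aux17.sE p ∈ S ∧ Aux17.sE (p+1) ∈ S := by
        simp only [hc] at hp2
        rw [if_neg (hB p)] at hp2
        split_ifs at hp2 with u1 u2
        · exact ⟨u1, u2⟩
        all_goals omega
      have hdef : ∀ i : ZMod n, Aux17.sE i ∈ S → Aux17.sE (i+1) ∈ S → i = p := by
        intro i hi hi1
        refine huniq i ?_
        simp only [hc]
        rw [if_pos hi, if_pos hi1]
        omega
      have hadj34 : (cycleSq n).Adj (p+3) (p+4) := by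
        have := Aux17.adj_s hn (p+3); rwa [show p+3+1 = p+4 by ring] at this
      rcases lt_or_gt_of_ne (hne _ _ hadj34) with ha | ha
      · exact Aux17.caseO1 hn hM hne hdep hcov hB p hps.2 hdef ha
      · exact Aux17.caseO1 hn hM (Aux17.hne_neg hne) (Aux17.hdep_neg hdep) hcov hB p hps.2 hdef
          (by simpa using neg_lt_neg ha)
  · -- Bs.card = 1
    have hBc : Bs.card = 1 := le_antisymm hBle1 hB1'
    obtain ⟨j, hj⟩ := Finset.card_eq_one.mp hBc
    have hjB : Aux17.lE j ∈ S := (hBmem j).mp (by simp [hj])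
    have hBuniq : ∀ x : ZMod n, Aux17.lE x ∈ S → x = j := by
      intro x hx
      have : x ∈ Bs := (hBmem x).mpr hx
      rw [hj] at this
      simpa using this
    have hsum_eq : ∑ i : ZMod n, c i = n := by omega
    have hall := hall_of hsum_eq
    have ho2 : n % 2 = 1 := by omega
    obtain ⟨M, hM⟩ : ∃ M, n = 2*M+3 := ⟨(n-3)/2, by omega⟩
    have h4 : ∀ i : ZMod n, Aux17.sE (i+1) ∈ S →
        Aux17.sE i ∉ S ∧ Aux17.lE i ∉ S ∧ Aux17.sE (i+2) ∉ S ∧ Aux17.lE (i+1) ∉ S := by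
      intro i hi
      have hci := hall i
      have hci1 := hall (i+1)
      simp only [hc] at hci hci1
      rw [if_pos hi] at hci
      rw [if_pos hi, show i+1+1 = i+2 by ring] at hci1
      refine ⟨?_, ?_, ?_, ?_⟩
      · intro hmem; rw [if_pos hmem] at hci; omega
      · intro hmem; rw [if_pos hmem] at hci; omega
      · intro hmem; rw [if_pos hmem] at hci1; omega
      · intro hmem; rw [if_pos hmem] at hci1; omega
    have hnext : ∀ i : ZMod n, Aux17.sE (i+1) ∈ S →
        (Aux17.sE (i+3) ∈ S ∨ Aux17.lE (i+2) ∈ S) := by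
      intro i hi
      obtain ⟨-, -, hsi2, -⟩ := h4 i hi
      rcases hcov (i+2) with h | h | h
      · exact absurd h hsi2
      · left; rwa [show i+2+1 = i+3 by ring] at h
      · right; exact h
    have hj1 : Aux17.sE (j+1) ∉ S := by
      intro hmem
      have hcj := hall j
      simp only [hc] at hcj
      rw [if_pos hjB, if_pos hmem] at hcj
      omega
    have hj2 : Aux17.sE (j+2) ∈ S := by
      rcases hcov (j+1) with h | h | h
      · exact absurd h hj1
      · rwa [show j+1+1 = j+2 by ring] at h
      · exfalso
        have := hBuniq _ h
        exact Aux17.nz1 hn (by linear_combination this)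
    have hadj23 : (cycleSq n).Adj (j+2) (j+3) := by
      have := Aux17.adj_s hn (j+2); rwa [show j+2+1 = j+3 by ring] at this
    rcases lt_or_gt_of_ne (hne _ _ hadj23) with ha | ha
    · exact Aux17.caseO2 hn hM hne hdep h4 hnext j hBuniq hj1 hj2 ha
    · exact Aux17.caseO2 hn hM (Aux17.hne_neg hne) (Aux17.hdep_neg hdep) h4 hnext j hBuniq hj1 hj2
        (by simpa using neg_lt_neg ha)
end

section
/- If G is a graph with chromatic number strictly less than its girth, then G has an acyclic orientation with no dependent arcs, i.e., d_min(G) = 0. -/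
open SimpleGraph

variable {V : Type*}

/-- If `χ(G) < g(G)` then `G` has an acyclic orientation with no dependent arcs,
i.e. `d_min(G) = 0`. -/
theorem stmt18 {V : Type*} [Fintype V] (G : SimpleGraph V)
    (h : G.chromaticNumber < G.girth) :
    ∃ D : GraphOrientation G, D.Acyclic ∧ depCount D = 0 := by
  classical
  -- get a coloring with n = χ(G) colors
  have hχtop : G.chromaticNumber ≠ ⊤ := by
    intro ht
    rw [ht] at h
    exact (not_top_lt h)
  obtain ⟨n, hn⟩ := WithTop.ne_top_iff_exists.mp hχtop
  have hcol : G.Colorable n := by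
    rw [← chromaticNumber_le_iff_colorable, ← hn]
    exact_mod_cast le_rfl
  obtain ⟨C⟩ := hcol
  -- orientation from low color to high color
  refine ⟨⟨fun u v => G.Adj u v ∧ C u < C v, fun u v hr => hr.1,
    fun u v ha => ?_, fun u v hr hr' => absurd hr'.2 (not_lt.mpr hr.2.le)⟩, ?_, ?_⟩
  · rcases lt_or_gt_of_ne (C.valid ha) with hlt | hgt
    · exact Or.inl ⟨ha, hlt⟩
    · exact Or.inr ⟨ha.symm, hgt⟩
  · -- acyclicity
    intro v hv
    have : ∀ a b, Relation.TransGen (fun u v => G.Adj u v ∧ C u < C v) a b → C a < C b := by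
      intro a b hab
      induction hab with
      | single h => exact h.2
      | tail _ h ih => exact ih.trans h.2
    exact lt_irrefl _ (this v v hv)
  · -- no dependent arcs
    rw [depCount, show (GraphOrientation.depArcs _) = (∅ : Set (V × V)) from ?_,
      Set.ncard_empty]
    ext ⟨u, v⟩
    simp only [Set.mem_empty_iff_false, iff_false, GraphOrientation.depArcs,
      Set.mem_setOf_eq]
    rintro ⟨⟨hadj, hCuv⟩, hchain⟩
    -- from the chain, build a path from u to v avoiding edge s(u,v)
    have key : ∀ b, Relation.TransGen
        (fun a b => (G.Adj a b ∧ C a < C b) ∧ ¬(a = u ∧ b = v)) u b →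
        ∃ p : G.Walk u b, s(u, v) ∉ p.edges ∧
          (C u).val + p.length ≤ (C b).val ∧ C u < C b := by
      intro b hb
      induction hb with
      | @single b hstep =>
        refine ⟨Walk.cons hstep.1.1 Walk.nil, ?_, ?_, hstep.1.2⟩
        · simp only [Walk.edges_cons, Walk.edges_nil, List.mem_singleton]
          intro he
          rw [Sym2.eq_iff] at he
          rcases he with ⟨-, hvb⟩ | ⟨hub, hvu⟩
          · exact hstep.2 ⟨rfl, hvb.symm⟩
          · exact G.loopless.irrefl u (hvu ▸ hadj)
        · simpa using hstep.1.2
      | @tail b c hub hstep ih =>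
        obtain ⟨p, hpe, hplen, hlt⟩ := ih
        refine ⟨p.concat hstep.1.1, ?_, ?_, hlt.trans hstep.1.2⟩
        · rw [Walk.edges_concat, List.concat_eq_append, List.mem_append,
            List.mem_singleton]
          rintro (hmem | heq)
          · exact hpe hmem
          · rw [Sym2.eq_iff] at heq
            rcases heq with ⟨hub', hvc⟩ | ⟨huc, hvb⟩
            · exact absurd (hub' ▸ hlt) (lt_irrefl _)
            · refine absurd (hlt.trans ?_) (lt_irrefl (C u))
              rw [huc]
              exact hstep.1.2
        · rw [Walk.length_concat]
          have := hstep.1.2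
          omega
    obtain ⟨p, hpe, hplen, -⟩ := key v hchain
    -- bypass to get a path, then form a cycle with the arc v → u
    have hq : s(u, v) ∉ p.bypass.edges := fun hm => hpe (p.edges_bypass_subset hm)
    have hcyc : (Walk.cons hadj.symm p.bypass).IsCycle :=
      Path.cons_isCycle ⟨p.bypass, p.bypass_isPath⟩ hadj.symm (by
        rwa [Sym2.eq_swap] at hq)
    -- girth bound
    have h1 : G.egirth ≤ ((Walk.cons hadj.symm p.bypass).length : ℕ∞) := by
      refine iInf_le_of_le v (iInf_le_of_le (Walk.cons hadj.symm p.bypass) ?_)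
      exact iInf_le_of_le hcyc le_rfl
    have hgle : G.girth ≤ (Walk.cons hadj.symm p.bypass).length := by
      have h2 : ((Walk.cons hadj.symm p.bypass).length : ℕ∞) ≠ ⊤ := ENat.coe_ne_top _
      have := ENat.toNat_le_toNat h1 h2
      rw [ENat.toNat_coe] at this
      simpa [girth] using this
    have hlen : (Walk.cons hadj.symm p.bypass).length ≤ n := by
      have h2 := p.length_bypass_le
      have h3 : (C v).val < n := (C v).isLt
      simp only [Walk.length_cons]
      omega
    have hnlt : n < G.girth := by
      have := h
      rw [← hn] at this
      have h4 := WithTop.coe_lt_coe.mp this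
      exact_mod_cast h4
    omega
end
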